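/- arXiv:2112.04142 — 2 statements merged into one kernel-verified Lean document; each statement's English description precedes it below -/
import Mathlib

section
/- For every integer n ≥ 1, χ_la(C_{2n+1} ∨ O_{2n}) = 4. -/
open Finset SimpleGraph
open scoped Classical

/-- The induced vertex label (weight) of `x`: the sum of `f` over all edges incident to `x`. -/
noncomputable def vertexWeight {V : Type*} [Fintype V] (G : SimpleGraph V)
    (f : Sym2 V → ℕ) (x : V) : ℕ :=
  ∑ e ∈ G.edgeFinset.filter (fun e => x ∈ e), f e

/-- `f` is a local antimagic labeling of `G`: it restricts to a bijection from the edge set of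
`G` onto `{1, …, q}` (where `q` is the number of edges), and adjacent vertices get distinct
induced vertex labels. -/
def IsLocalAntimagic {V : Type*} [Fintype V] (G : SimpleGraph V) (f : Sym2 V → ℕ) : Prop :=
  Set.BijOn f G.edgeSet (Set.Icc 1 G.edgeSet.ncard) ∧
  ∀ ⦃x y : V⦄, G.Adj x y → vertexWeight G f x ≠ vertexWeight G f y

/-- The number of distinct induced vertex labels, `c(f)`. -/
noncomputable def colorCount {V : Type*} [Fintype V] (G : SimpleGraph V)
    (f : Sym2 V → ℕ) : ℕ :=
  (Finset.univ.image (vertexWeight G f)).card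

/-- The local antimagic chromatic number `χ_la(G)`. -/
noncomputable def chiLA {V : Type*} [Fintype V] (G : SimpleGraph V) : ℕ :=
  sInf { n | ∃ f : Sym2 V → ℕ, IsLocalAntimagic G f ∧ colorCount G f = n }

/-- The join `G ∨ H` of two vertex-disjoint graphs. -/
def joinG {α β : Type*} (G : SimpleGraph α) (H : SimpleGraph β) : SimpleGraph (α ⊕ β) :=
  SimpleGraph.fromRel (fun x y =>
    (∃ a b, x = Sum.inl a ∧ y = Sum.inl b ∧ G.Adj a b) ∨
    (∃ a b, x = Sum.inr a ∧ y = Sum.inr b ∧ H.Adj a b) ∨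
    (∃ a b, x = Sum.inl a ∧ y = Sum.inr b))


def bfun (n i : ℕ) : ℕ := if i % 2 = 0 then i / 2 else n + 1 + i / 2
def afun (i : ℕ) : ℕ := if i = 0 then 0 else if i % 2 = 1 then i + 1 else i - 1

lemma bfun_lt {n i : ℕ} (h : i < 2*n+1) : bfun n i < 2*n+1 := by
  unfold bfun; split <;> omega

lemma bfun_inj {n i j : ℕ} (hi : i < 2*n+1) (hj : j < 2*n+1)
    (h : bfun n i = bfun n j) : i = j := by
  unfold bfun at h; split_ifs at h <;> omega

lemma afun_lt {n i : ℕ} (hn : 1 ≤ n) (h : i < 2*n+1) : afun i < 2*n+1 := by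
  unfold afun; split_ifs <;> omega

lemma afun_inj {i j : ℕ} (h : afun i = afun j) : i = j := by
  unfold afun at h; split_ifs at h <;> omega

noncomputable def bipL (n : ℕ) (a : Fin (2*n+1)) (b : Fin (2*n)) : ℕ :=
  (2*n+1) * (((afun a.val : ZMod (2*n+1)) + ((b.val+1 : ℕ) : ZMod (2*n+1))).val)
    + (((afun a.val : ZMod (2*n+1)) + ((b.val+1 : ℕ) : ZMod (2*n+1))
        + ((b.val+1 : ℕ) : ZMod (2*n+1))).val) + 1

def cycL (n : ℕ) (a : Fin (2*n+1)) : ℕ := (2*n+2) * bfun n a.val + 1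

noncomputable def labF (n : ℕ) : (Fin (2*n+1) ⊕ Fin (2*n)) → (Fin (2*n+1) ⊕ Fin (2*n)) → ℕ
  | Sum.inl a, Sum.inl b =>
      if b = a + 1 ∧ a = b + 1 then 0
      else if b = a + 1 then cycL n a else if a = b + 1 then cycL n b else 0
  | Sum.inl a, Sum.inr b => bipL n a b
  | Sum.inr b, Sum.inl a => bipL n a b
  | Sum.inr _, Sum.inr _ => 0

lemma labF_symm (n : ℕ) (x y : Fin (2*n+1) ⊕ Fin (2*n)) : labF n x y = labF n y x := by
  cases x with
  | inl a => cases y with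
    | inl b =>
        simp only [labF]
        rcases Decidable.em (b = a+1) with h1|h1 <;> rcases Decidable.em (a = b+1) with h2|h2
        · rw [if_pos ⟨h1,h2⟩, if_pos ⟨h2,h1⟩]
        · rw [if_neg (fun h => h2 h.2), if_pos h1, if_neg (fun h => h2 h.1), if_neg h2, if_pos h1]
        · rw [if_neg (fun h => h1 h.1), if_neg h1, if_pos h2, if_neg (fun h => h1 h.2), if_pos h2]
        · rw [if_neg (fun h => h1 h.1), if_neg h1, if_neg h2, if_neg (fun h => h2 h.1),
            if_neg h2, if_neg h1]
    | inr b => rfl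
  | inr a => cases y with
    | inl b => rfl
    | inr b => rfl

noncomputable def edgeLab (n : ℕ) : Sym2 (Fin (2*n+1) ⊕ Fin (2*n)) → ℕ :=
  Sym2.lift ⟨labF n, labF_symm n⟩

lemma edgeLab_mk (n : ℕ) (x y : Fin (2*n+1) ⊕ Fin (2*n)) :
    edgeLab n s(x, y) = labF n x y := rfl

noncomputable abbrev JG (n : ℕ) : SimpleGraph (Fin (2*n+1) ⊕ Fin (2*n)) :=
  joinG (cycleGraph (2*n+1)) (⊥ : SimpleGraph (Fin (2*n)))

lemma adj_inl_inl {n : ℕ} (a b : Fin (2*n+1)) :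
    (JG n).Adj (Sum.inl a) (Sum.inl b) ↔ (cycleGraph (2*n+1)).Adj a b := by
  unfold JG joinG
  rw [fromRel_adj]
  constructor
  · rintro ⟨hne, h⟩
    rcases h with (⟨a',b',h1,h2,h3⟩|⟨a',b',h1,h2,h3⟩|⟨a',b',h1,h2⟩)|(⟨a',b',h1,h2,h3⟩|⟨a',b',h1,h2,h3⟩|⟨a',b',h1,h2⟩) <;>
      simp_all
    exact h3.symm
  · intro h
    exact ⟨by simp [h.ne], Or.inl (Or.inl ⟨a, b, rfl, rfl, h⟩)⟩

lemma adj_inl_inr {n : ℕ} (a : Fin (2*n+1)) (b : Fin (2*n)) :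
    (JG n).Adj (Sum.inl a) (Sum.inr b) := by
  unfold JG joinG
  rw [fromRel_adj]
  exact ⟨by simp, Or.inl (Or.inr (Or.inr ⟨a, b, rfl, rfl⟩))⟩

lemma not_adj_inr_inr {n : ℕ} (a b : Fin (2*n)) :
    ¬ (JG n).Adj (Sum.inr a) (Sum.inr b) := by
  unfold JG joinG
  rw [fromRel_adj]
  rintro ⟨hne, h⟩
  rcases h with (⟨a',b',h1,h2,h3⟩|⟨a',b',h1,h2,h3⟩|⟨a',b',h1,h2⟩)|(⟨a',b',h1,h2,h3⟩|⟨a',b',h1,h2,h3⟩|⟨a',b',h1,h2⟩) <;>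
    simp_all

lemma val_one_m (n : ℕ) (hn : 1 ≤ n) : ((1 : Fin (2*n+1))).val = 1 := by
  rw [Fin.val_one']; exact Nat.mod_eq_of_lt (by omega)

lemma two_ne_zero_m (n : ℕ) (hn : 1 ≤ n) : (2 : Fin (2*n+1)) ≠ 0 := by
  intro h
  have h2 := congrArg Fin.val h
  rw [Fin.val_zero] at h2
  rw [show (2 : Fin (2*n+1)) = 1 + 1 by open Fin.CommRing in norm_num, Fin.val_add_one] at h2
  split at h2
  · rename_i hl
    rw [Fin.ext_iff, val_one_m n hn, Fin.val_last] at hl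
    omega
  · rw [val_one_m n hn] at h2; omega

lemma sub_one_val (n : ℕ) (hn : 1 ≤ n) (i : Fin (2*n+1)) :
    (i - 1).val = if i.val = 0 then 2*n else i.val - 1 := by
  rw [Fin.sub_def, val_one_m n hn]
  simp only []
  by_cases h : i.val = 0
  · rw [h, if_pos rfl]
    exact Nat.mod_eq_of_lt (by omega)
  · rw [if_neg h]
    have h1 : 2*n+1-1+i.val = (2*n+1) + (i.val - 1) := by omega
    rw [h1, Nat.add_mod_left]
    exact Nat.mod_eq_of_lt (by omega)

lemma add_one_val (n : ℕ) (i : Fin (2*n+1)) :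
    (i + 1).val = if i.val = 2*n then 0 else i.val + 1 := by
  rw [Fin.val_add_one]
  congr 1
  simp [Fin.ext_iff, Fin.val_last]

lemma cyc_adj (n : ℕ) (hn : 1 ≤ n) (a b : Fin (2*n+1)) :
    (cycleGraph (2*n+1)).Adj a b ↔ b = a + 1 ∨ a = b + 1 := by
  rw [cycleGraph_adj']
  have k : ∀ u v : Fin (2*n+1), (u - v).val = 1 ↔ u = v + 1 := by
    intro u v
    constructor
    · intro h
      have : u - v = 1 := by
        apply Fin.val_injective; rw [h, val_one_m n hn]
      rw [sub_eq_iff_eq_add] at this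
      rw [this]; exact add_comm 1 v
    · intro h
      rw [h]
      have : v + 1 - v = 1 := by abel
      rw [this, val_one_m n hn]
  rw [k, k]
  tauto

noncomputable def cycEdges (n : ℕ) : Finset (Sym2 (Fin (2*n+1) ⊕ Fin (2*n))) :=
  Finset.univ.image (fun i : Fin (2*n+1) => s(Sum.inl i, Sum.inl (i+1)))

noncomputable def bipEdges (n : ℕ) : Finset (Sym2 (Fin (2*n+1) ⊕ Fin (2*n))) :=
  Finset.univ.image (fun p : Fin (2*n+1) × Fin (2*n) => s(Sum.inl p.1, Sum.inr p.2))

lemma cyc_mem_edge (n : ℕ) (hn : 1 ≤ n) (i : Fin (2*n+1)) :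
    s(Sum.inl i, Sum.inl (i+1)) ∈ (JG n).edgeFinset := by
  rw [mem_edgeFinset, mem_edgeSet, adj_inl_inl, cyc_adj n hn]; left; rfl

lemma bip_mem_edge (n : ℕ) (i : Fin (2*n+1)) (j : Fin (2*n)) :
    s(Sum.inl i, Sum.inr j) ∈ (JG n).edgeFinset := by
  rw [mem_edgeFinset, mem_edgeSet]; exact adj_inl_inr i j

lemma cycMap_inj (n : ℕ) (hn : 1 ≤ n) :
    Function.Injective (fun i : Fin (2*n+1) => s(Sum.inl i, Sum.inl (i+1)) :
      Fin (2*n+1) → Sym2 (Fin (2*n+1) ⊕ Fin (2*n))) := by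
  intro i i' h
  simp only [Sym2.eq_iff, Sum.inl.injEq] at h
  rcases h with ⟨h1, h2⟩ | ⟨h1, h2⟩
  · exact h1
  · exfalso
    apply two_ne_zero_m n hn
    have : i' = i' + 2 := by
      calc i' = i + 1 := h2.symm
        _ = (i' + 1) + 1 := by rw [h1]
        _ = i' + 2 := by rw [add_assoc]; open Fin.CommRing in norm_num
    exact (left_eq_add.1 this)

lemma bipMap_inj (n : ℕ) :
    Function.Injective (fun p : Fin (2*n+1) × Fin (2*n) => s(Sum.inl p.1, Sum.inr p.2) :
      _ → Sym2 (Fin (2*n+1) ⊕ Fin (2*n))) := by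
  intro p q h
  simp only [Sym2.eq_iff, Sum.inl.injEq, Sum.inr.injEq] at h
  rcases h with ⟨h1, h2⟩ | ⟨h1, h2⟩
  · exact Prod.ext h1 h2
  · simp at h1

lemma edgeFinset_JG (n : ℕ) (hn : 1 ≤ n) :
    (JG n).edgeFinset = cycEdges n ∪ bipEdges n := by
  apply Finset.Subset.antisymm
  · intro e he
    induction e using Sym2.ind with
    | _ x y =>
      rw [mem_edgeFinset, mem_edgeSet] at he
      cases x with
      | inl a => cases y with
        | inl b =>
          rw [adj_inl_inl, cyc_adj n hn] at he
          apply mem_union_left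
          rcases he with h | h
          · exact mem_image.2 ⟨a, mem_univ a, by rw [h]⟩
          · exact mem_image.2 ⟨b, mem_univ b, by rw [h]; exact Sym2.eq_swap⟩
        | inr b =>
          exact mem_union_right _ (mem_image.2 ⟨(a, b), mem_univ _, rfl⟩)
      | inr a => cases y with
        | inl b =>
          refine mem_union_right _ (mem_image.2 ⟨(b, a), mem_univ _, ?_⟩)
          exact Sym2.eq_swap
        | inr b => exact absurd he (not_adj_inr_inr a b)
  · intro e he
    rcases mem_union.1 he with h | h
    · obtain ⟨i, -, rfl⟩ := mem_image.1 h
      exact cyc_mem_edge n hn i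
    · obtain ⟨p, -, rfl⟩ := mem_image.1 h
      exact bip_mem_edge n p.1 p.2

lemma disj_cyc_bip (n : ℕ) : Disjoint (cycEdges n) (bipEdges n) := by
  rw [Finset.disjoint_left]
  intro e he hb
  obtain ⟨i, -, hi⟩ := mem_image.1 he
  obtain ⟨p, -, hp⟩ := mem_image.1 hb
  rw [← hi] at hp
  simp [Sym2.eq_iff] at hp

lemma card_edgeFinset_JG (n : ℕ) (hn : 1 ≤ n) :
    (JG n).edgeFinset.card = (2*n+1)^2 := by
  rw [edgeFinset_JG n hn, Finset.card_union_of_disjoint (disj_cyc_bip n)]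
  rw [cycEdges, bipEdges, Finset.card_image_of_injective _ (cycMap_inj n hn),
    Finset.card_image_of_injective _ (bipMap_inj n), card_univ, card_univ,
    Fintype.card_fin, Fintype.card_prod, Fintype.card_fin, Fintype.card_fin]
  ring

lemma ncard_edgeSet_JG (n : ℕ) (hn : 1 ≤ n) :
    (JG n).edgeSet.ncard = (2*n+1)^2 := by
  rw [← coe_edgeFinset, Set.ncard_coe_finset]
  exact card_edgeFinset_JG n hn
lemma edgeLab_cyc (n : ℕ) (hn : 1 ≤ n) (i : Fin (2*n+1)) :
    edgeLab n s(Sum.inl i, Sum.inl (i+1)) = cycL n i := by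
  rw [edgeLab_mk]
  have hno : ¬(i = i + 1 + 1) := by
    intro h
    rw [add_assoc] at h
    apply two_ne_zero_m n hn
    have h2 := left_eq_add.1 h
    rw [show (1+1 : Fin (2*n+1)) = 2 by open Fin.CommRing in norm_num] at h2
    exact h2
  simp [labF, hno]

lemma edgeLab_bip (n : ℕ) (i : Fin (2*n+1)) (j : Fin (2*n)) :
    edgeLab n s(Sum.inl i, Sum.inr j) = bipL n i j := rfl

lemma sub_add_cancel_fin {n : ℕ} (i : Fin (2*n+1)) : i - 1 + 1 = i := sub_add_cancel i 1

lemma filter_inr (n : ℕ) (hn : 1 ≤ n) (j : Fin (2*n))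
    {inst : Fintype ((JG n).edgeSet)} {dp : DecidablePred (fun e => Sum.inr j ∈ e)} :
    @Finset.filter _ (fun e => Sum.inr j ∈ e) dp (@SimpleGraph.edgeFinset _ (JG n) inst)
      = Finset.univ.image (fun i : Fin (2*n+1) => s(Sum.inl i, Sum.inr j)) := by
  have hE : @SimpleGraph.edgeFinset _ (JG n) inst
      = @SimpleGraph.edgeFinset _ (JG n) ((JG n).fintypeEdgeSet) := by
    congr 1
    exact Subsingleton.elim _ _
  rw [hE]
  ext e
  rw [mem_filter]
  constructor
  · rintro ⟨he, hm⟩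
    rw [edgeFinset_JG n hn] at he
    rcases mem_union.1 he with h | h
    · obtain ⟨i, -, rfl⟩ := mem_image.1 h
      simp at hm
    · obtain ⟨p, -, rfl⟩ := mem_image.1 h
      simp only [Sym2.mem_iff] at hm
      rcases hm with h' | h'
      · exact absurd h' (by simp)
      · exact mem_image.2 ⟨p.1, mem_univ _, by rw [Sum.inr_injective h']⟩
  · intro h
    obtain ⟨i, -, rfl⟩ := mem_image.1 h
    exact ⟨bip_mem_edge n i j, by simp⟩

lemma weight_inr (n : ℕ) (hn : 1 ≤ n) (j : Fin (2*n)) :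
    vertexWeight (JG n) (edgeLab n) (Sum.inr j) = ∑ i : Fin (2*n+1), bipL n i j := by
  rw [vertexWeight, filter_inr n hn j, Finset.sum_image]
  · rfl
  · intro x _ y _ h
    simp only [Sym2.eq_iff, Sum.inl.injEq] at h
    tauto

lemma filter_inl (n : ℕ) (hn : 1 ≤ n) (i : Fin (2*n+1))
    {inst : Fintype ((JG n).edgeSet)} {dp : DecidablePred (fun e => Sum.inl i ∈ e)} :
    @Finset.filter _ (fun e => Sum.inl i ∈ e) dp (@SimpleGraph.edgeFinset _ (JG n) inst)
      = insert s(Sum.inl (i-1), Sum.inl i) (insert s(Sum.inl i, Sum.inl (i+1))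
          (Finset.univ.image (fun j : Fin (2*n) => s(Sum.inl i, Sum.inr j)))) := by
  have hE : @SimpleGraph.edgeFinset _ (JG n) inst
      = @SimpleGraph.edgeFinset _ (JG n) ((JG n).fintypeEdgeSet) := by
    congr 1
    exact Subsingleton.elim _ _
  rw [hE]
  ext e
  rw [mem_filter]
  constructor
  · rintro ⟨he, hm⟩
    rw [edgeFinset_JG n hn] at he
    rcases mem_union.1 he with h | h
    · obtain ⟨k, -, rfl⟩ := mem_image.1 h
      simp only [Sym2.mem_iff, Sum.inl.injEq] at hm
      rcases hm with rfl | h'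
      · exact mem_insert.2 (Or.inr (mem_insert.2 (Or.inl rfl)))
      · apply mem_insert.2; left
        have hk : k = i - 1 := by rw [h']; abel
        rw [hk]
        congr 1
        rw [← hk, ← h']
    · obtain ⟨p, -, rfl⟩ := mem_image.1 h
      simp only [Sym2.mem_iff] at hm
      rcases hm with h' | h'
      · rw [mem_insert, mem_insert]
        right; right
        exact mem_image.2 ⟨p.2, mem_univ _, by rw [Sum.inl_injective h']⟩
      · exact absurd h' (by simp)
  · intro h
    rcases mem_insert.1 h with rfl | h
    · refine ⟨?_, by simp⟩
      have h2 : s(Sum.inl (i-1), (Sum.inl i : Fin (2*n+1) ⊕ Fin (2*n)))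
          = s(Sum.inl (i-1), Sum.inl (i-1+1)) := by rw [sub_add_cancel_fin]
      rw [h2]
      exact cyc_mem_edge n hn (i-1)
    rcases mem_insert.1 h with rfl | h
    · exact ⟨cyc_mem_edge n hn i, by simp⟩
    · obtain ⟨j, -, rfl⟩ := mem_image.1 h
      exact ⟨bip_mem_edge n i j, by simp⟩

lemma weight_inl (n : ℕ) (hn : 1 ≤ n) (i : Fin (2*n+1)) :
    vertexWeight (JG n) (edgeLab n) (Sum.inl i)
      = cycL n (i-1) + cycL n i + ∑ j : Fin (2*n), bipL n i j := by
  have hne1 : (i : Fin (2*n+1)) ≠ i + 1 := by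
    intro h
    have h2 := left_eq_add.1 h
    rw [Fin.ext_iff, val_one_m n hn, Fin.val_zero] at h2
    omega
  have hne2 : i - 1 ≠ i + 1 := by
    intro h
    rw [sub_eq_iff_eq_add, add_assoc] at h
    apply two_ne_zero_m n hn
    have h2 := left_eq_add.1 h
    rw [show (1+1 : Fin (2*n+1)) = 2 by open Fin.CommRing in norm_num] at h2
    exact h2
  have hm1 : s(Sum.inl (i-1), (Sum.inl i : Fin (2*n+1) ⊕ Fin (2*n)))
      ∉ insert s(Sum.inl i, Sum.inl (i+1))
        (Finset.univ.image (fun j : Fin (2*n) => s(Sum.inl i, Sum.inr j))) := by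
    rw [mem_insert]
    rintro (h | h)
    · simp only [Sym2.eq_iff, Sum.inl.injEq] at h
      rcases h with ⟨h1, h2⟩ | ⟨h1, h2⟩
      · exact hne1 h2
      · exact hne2 h1
    · obtain ⟨j, -, hj⟩ := mem_image.1 h
      simp [Sym2.eq_iff] at hj
  have hm2 : s(Sum.inl i, (Sum.inl (i+1) : Fin (2*n+1) ⊕ Fin (2*n)))
      ∉ Finset.univ.image (fun j : Fin (2*n) => s(Sum.inl i, Sum.inr j)) := by
    intro h
    obtain ⟨j, -, hj⟩ := mem_image.1 h
    simp [Sym2.eq_iff] at hj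
  rw [vertexWeight, filter_inl n hn i, Finset.sum_insert hm1, Finset.sum_insert hm2,
    Finset.sum_image (by intro x _ y _ h; simp only [Sym2.eq_iff, Sum.inr.injEq] at h; tauto)]
  have e1 : edgeLab n s(Sum.inl (i-1), Sum.inl i) = cycL n (i-1) := by
    have h2 : s(Sum.inl (i-1), (Sum.inl i : Fin (2*n+1) ⊕ Fin (2*n)))
        = s(Sum.inl (i-1), Sum.inl (i-1+1)) := by rw [sub_add_cancel_fin]
    rw [h2, edgeLab_cyc n hn]
  rw [e1, edgeLab_cyc n hn i, ← add_assoc]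
  rfl
noncomputable def Tn (n : ℕ) : ℕ := ∑ v : ZMod (2*n+1), v.val

noncomputable def aZ (n : ℕ) (i : Fin (2*n+1)) : ZMod (2*n+1) := ((afun i.val : ℕ) : ZMod (2*n+1))

noncomputable def En (n : ℕ) (i : Fin (2*n+1)) : ℕ := ∑ u ∈ Finset.univ.erase (aZ n i), u.val

lemma aZ_val (n : ℕ) (hn : 1 ≤ n) (i : Fin (2*n+1)) : (aZ n i).val = afun i.val :=
  ZMod.val_cast_of_lt (afun_lt hn i.isLt)

lemma aZ_bij (n : ℕ) (hn : 1 ≤ n) : Function.Bijective (aZ n) := by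
  rw [Fintype.bijective_iff_injective_and_card]
  refine ⟨?_, by rw [Fintype.card_fin, ZMod.card]⟩
  intro i j h
  have h2 : afun i.val = afun j.val := by
    rw [← aZ_val n hn i, ← aZ_val n hn j, h]
  exact Fin.ext (afun_inj h2)

lemma sum_shift (n : ℕ) (c : ZMod (2*n+1)) :
    ∑ u : ZMod (2*n+1), (u + c).val = Tn n :=
  (Equiv.addRight c).bijective.sum_comp (fun u : ZMod (2*n+1) => u.val)

lemma col_sum (n : ℕ) (hn : 1 ≤ n) (j : Fin (2*n)) :
    ∑ i : Fin (2*n+1), bipL n i j = (2*n+2) * Tn n + (2*n+1) := by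
  set c : ZMod (2*n+1) := ((j.val+1 : ℕ) : ZMod (2*n+1)) with hc
  have h1 : ∑ i : Fin (2*n+1), bipL n i j
      = ∑ u : ZMod (2*n+1), ((2*n+1) * (u + c).val + (u + c + c).val + 1) := by
    rw [← (aZ_bij n hn).sum_comp
      (fun u : ZMod (2*n+1) => (2*n+1) * (u + c).val + (u + c + c).val + 1)]
    rfl
  rw [h1, Finset.sum_add_distrib, Finset.sum_add_distrib, ← Finset.mul_sum, sum_shift]
  have h2 : ∑ u : ZMod (2*n+1), (u + c + c).val = Tn n := by
    have h3 : ∀ u : ZMod (2*n+1), u + c + c = u + (c + c) := fun u => add_assoc u c c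
    simp_rw [h3, sum_shift]
  rw [h2, Finset.sum_const, card_univ, ZMod.card, smul_eq_mul, mul_one]
  ring

lemma afun_add_En (n : ℕ) (hn : 1 ≤ n) (i : Fin (2*n+1)) :
    afun i.val + En n i = Tn n := by
  rw [En, Tn, ← aZ_val n hn i]
  exact Finset.add_sum_erase _ _ (mem_univ _)

lemma sum_erase_shift (n : ℕ) (a : ZMod (2*n+1)) :
    ∑ c ∈ Finset.univ.erase (0 : ZMod (2*n+1)), (a + c).val
      = ∑ u ∈ Finset.univ.erase a, u.val := by
  apply Finset.sum_nbij' (fun c => a + c) (fun u => u - a)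
  · intro c hcm
    rw [mem_erase] at hcm ⊢
    refine ⟨?_, mem_univ _⟩
    intro h
    exact hcm.1 (add_eq_left.1 h)
  · intro u hu
    rw [mem_erase] at hu ⊢
    refine ⟨?_, mem_univ _⟩
    intro h
    exact hu.1 (sub_eq_zero.1 h)
  · intro c _; exact add_sub_cancel_left a c
  · intro u _; exact add_sub_cancel a u
  · intro c _; rfl

lemma double_bij (n : ℕ) (hn : 1 ≤ n) (g : ZMod (2*n+1) → ℕ) :
    ∑ c ∈ Finset.univ.erase (0 : ZMod (2*n+1)), g (c + c)
      = ∑ d ∈ Finset.univ.erase (0 : ZMod (2*n+1)), g d := by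
  have htwo : (2 : ZMod (2*n+1)) * ((n+1 : ℕ) : ZMod (2*n+1)) = 1 := by
    have h0 : (2 : ZMod (2*n+1)) * ((n+1 : ℕ) : ZMod (2*n+1))
        = ((2*n+1+1 : ℕ) : ZMod (2*n+1)) := by push_cast; ring
    rw [h0, show (2*n+1+1 : ℕ) = (2*n+1)+1 from rfl, Nat.cast_add, ZMod.natCast_self,
      Nat.cast_one, zero_add]
  have hhalf : ∀ c : ZMod (2*n+1), ((n+1 : ℕ) : ZMod (2*n+1)) * (c + c) = c := by
    intro c
    have h0 : ((n+1 : ℕ) : ZMod (2*n+1)) * (c + c)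
        = ((2 : ZMod (2*n+1)) * ((n+1 : ℕ) : ZMod (2*n+1))) * c := by ring
    rw [h0, htwo, one_mul]
  have hdd : ∀ d : ZMod (2*n+1),
      ((n+1 : ℕ) : ZMod (2*n+1)) * d + ((n+1 : ℕ) : ZMod (2*n+1)) * d = d := by
    intro d
    have h0 : ((n+1 : ℕ) : ZMod (2*n+1)) * d + ((n+1 : ℕ) : ZMod (2*n+1)) * d
        = ((2 : ZMod (2*n+1)) * ((n+1 : ℕ) : ZMod (2*n+1))) * d := by ring
    rw [h0, htwo, one_mul]
  apply Finset.sum_nbij' (fun c => c + c) (fun d => ((n+1 : ℕ) : ZMod (2*n+1)) * d)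
  · intro c hc
    rw [mem_erase] at hc ⊢
    refine ⟨?_, mem_univ _⟩
    intro h
    apply hc.1
    rw [← hhalf c, h, mul_zero]
  · intro d hd
    rw [mem_erase] at hd ⊢
    refine ⟨?_, mem_univ _⟩
    intro h
    apply hd.1
    rw [← hdd d, h, add_zero]
  · intro c _; exact hhalf c
  · intro d _; exact hdd d
  · intro c _; rfl

lemma sum_over_j (n : ℕ) (hn : 1 ≤ n) (g : ZMod (2*n+1) → ℕ) :
    ∑ j : Fin (2*n), g (((j.val+1 : ℕ) : ZMod (2*n+1)))
      = ∑ c ∈ Finset.univ.erase (0 : ZMod (2*n+1)), g c := by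
  apply Finset.sum_nbij' (fun j : Fin (2*n) => ((j.val+1 : ℕ) : ZMod (2*n+1)))
      (fun c => (⟨c.val - 1, by have := c.val_lt; omega⟩ : Fin (2*n)))
  · intro j _
    rw [mem_erase]
    refine ⟨?_, mem_univ _⟩
    intro h
    have h2 := congrArg ZMod.val h
    rw [ZMod.val_cast_of_lt (by have := j.isLt; omega), ZMod.val_zero] at h2
    omega
  · intro c _; exact mem_univ _
  · intro j _
    apply Fin.ext
    simp only []
    rw [ZMod.val_cast_of_lt (by have := j.isLt; omega)]
    omega
  · intro c hc
    rw [mem_erase] at hc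
    have hv : c.val ≠ 0 := fun h => hc.1 (by rwa [ZMod.val_eq_zero] at h)
    simp only []
    have h2 : c.val - 1 + 1 = c.val := by omega
    rw [h2]
    exact ZMod.natCast_rightInverse c
  · intro j _; rfl

lemma row_sum (n : ℕ) (hn : 1 ≤ n) (i : Fin (2*n+1)) :
    ∑ j : Fin (2*n), bipL n i j = (2*n+2) * En n i + 2*n := by
  have h1 : ∑ j : Fin (2*n), bipL n i j
      = ∑ c ∈ Finset.univ.erase (0 : ZMod (2*n+1)),
          ((2*n+1) * (aZ n i + c).val + (aZ n i + c + c).val + 1) :=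
    sum_over_j n hn (fun c => (2*n+1) * (aZ n i + c).val + (aZ n i + c + c).val + 1)
  rw [h1, Finset.sum_add_distrib, Finset.sum_add_distrib, ← Finset.mul_sum, sum_erase_shift]
  have h2 : ∑ c ∈ Finset.univ.erase (0 : ZMod (2*n+1)), (aZ n i + c + c).val = En n i := by
    have h3 : ∀ c : ZMod (2*n+1), aZ n i + c + c = aZ n i + (c + c) :=
      fun c => add_assoc _ _ _
    simp_rw [h3]
    rw [double_bij n hn (fun d => (aZ n i + d).val), sum_erase_shift]
    rfl
  rw [h2, Finset.sum_const, card_erase_of_mem (mem_univ _), card_univ, ZMod.card,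
    smul_eq_mul, mul_one]
  have h4 : 2*n+1-1 = 2*n := by omega
  rw [h4]
  have h5 : ∑ u ∈ Finset.univ.erase (aZ n i), u.val = En n i := rfl
  rw [h5]
  ring

def svals (n : ℕ) (i : Fin (2*n+1)) : ℕ :=
  if i.val = 0 then n else if i.val % 2 = 1 then n - 1 else n + 1

lemma sigma_eq (n : ℕ) (hn : 1 ≤ n) (i : Fin (2*n+1)) :
    bfun n ((i-1 : Fin (2*n+1)).val) + bfun n i.val = afun i.val + svals n i := by
  have hv := sub_one_val n hn i
  have hlt := i.isLt
  rw [hv]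
  unfold bfun afun svals
  split_ifs <;> omega

lemma weight_inl_val (n : ℕ) (hn : 1 ≤ n) (i : Fin (2*n+1)) :
    vertexWeight (JG n) (edgeLab n) (Sum.inl i) = (2*n+2) * (Tn n + svals n i + 1) := by
  rw [weight_inl n hn i, row_sum n hn i]
  simp only [cycL]
  have key : Tn n + svals n i = bfun n ((i-1 : Fin (2*n+1)).val) + bfun n i.val + En n i := by
    have h1 := sigma_eq n hn i
    have h2 := afun_add_En n hn i
    omega
  rw [key]
  ring

lemma weight_inr_val (n : ℕ) (hn : 1 ≤ n) (j : Fin (2*n)) :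
    vertexWeight (JG n) (edgeLab n) (Sum.inr j) = (2*n+2) * Tn n + (2*n+1) := by
  rw [weight_inr n hn j, col_sum n hn j]
lemma svals_ne_adj (n : ℕ) (hn : 1 ≤ n) (i : Fin (2*n+1)) :
    svals n (i+1) ≠ svals n i := by
  have h := add_one_val n i
  have hlt := i.isLt
  unfold svals
  rcases Nat.lt_or_ge i.val (2*n) with hc | hc
  · have hw : (i+1 : Fin (2*n+1)).val = i.val + 1 := by rw [h, if_neg (by omega)]
    rw [hw]; split_ifs <;> first | omega | contradiction
  · have hc' : i.val = 2*n := by omega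
    have hw : (i+1 : Fin (2*n+1)).val = 0 := by rw [h, if_pos hc']
    rw [hw, hc']; split_ifs <;> first | omega | contradiction

lemma weight_mul_form (n : ℕ) (s : ℕ) :
    (2*n+2) * (Tn n + s + 1) = (2*n+2)*(Tn n) + (2*n+2)*(s+1) := by ring

lemma cyc_ne_null (n : ℕ) (s : ℕ) :
    (2*n+2) * (Tn n + s + 1) ≠ (2*n+2)*(Tn n) + (2*n+1) := by
  intro h
  rw [weight_mul_form] at h
  have h2 : 2*n+2 ≤ (2*n+2)*(s+1) := Nat.le_mul_of_pos_right _ (by omega)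
  omega

lemma cyc_ne_cyc (n : ℕ) {s t : ℕ} (hst : s ≠ t) :
    (2*n+2) * (Tn n + s + 1) ≠ (2*n+2) * (Tn n + t + 1) := by
  intro h
  have h2 := Nat.eq_of_mul_eq_mul_left (show 0 < 2*n+2 by omega) h
  omega

lemma weight_adj_ne (n : ℕ) (hn : 1 ≤ n) :
    ∀ ⦃x y : Fin (2*n+1) ⊕ Fin (2*n)⦄, (JG n).Adj x y →
      vertexWeight (JG n) (edgeLab n) x ≠ vertexWeight (JG n) (edgeLab n) y := by
  intro x y hxy
  cases x with
  | inl a => cases y with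
    | inl b =>
        rw [adj_inl_inl, cyc_adj n hn] at hxy
        rw [weight_inl_val n hn a, weight_inl_val n hn b]
        rcases hxy with h | h
        · rw [h]; exact (cyc_ne_cyc n (svals_ne_adj n hn a)).symm
        · rw [h]; exact cyc_ne_cyc n (svals_ne_adj n hn b)
    | inr b =>
        rw [weight_inl_val n hn a, weight_inr_val n hn b]
        exact cyc_ne_null n (svals n a)
  | inr a => cases y with
    | inl b =>
        rw [weight_inl_val n hn b, weight_inr_val n hn a]
        exact (cyc_ne_null n (svals n b)).symm
    | inr b => exact absurd hxy (not_adj_inr_inr a b)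

lemma svals_cases (n : ℕ) (i : Fin (2*n+1)) :
    svals n i = n ∨ svals n i = n - 1 ∨ svals n i = n + 1 := by
  unfold svals; split_ifs <;> simp

lemma image_weights (n : ℕ) (hn : 1 ≤ n) :
    Finset.univ.image (vertexWeight (JG n) (edgeLab n))
      = {(2*n+2) * (Tn n + (n-1) + 1), (2*n+2) * (Tn n + (n+1) + 1),
         (2*n+2) * (Tn n + n + 1), (2*n+2)*(Tn n) + (2*n+1)} := by
  apply Finset.Subset.antisymm
  · intro w hw
    obtain ⟨x, -, rfl⟩ := mem_image.1 hw
    cases x with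
    | inl i =>
        rw [weight_inl_val n hn i]
        rcases svals_cases n i with h | h | h <;> rw [h] <;> simp [Finset.mem_insert]
    | inr j =>
        rw [weight_inr_val n hn j]
        simp [Finset.mem_insert]
  · intro w hw
    simp only [Finset.mem_insert, Finset.mem_singleton] at hw
    rcases hw with rfl | rfl | rfl | rfl
    · refine mem_image.2 ⟨Sum.inl ⟨1, by omega⟩, mem_univ _, ?_⟩
      have hs : svals n ⟨1, by omega⟩ = n - 1 := by simp [svals]
      rw [weight_inl_val n hn, hs]
    · refine mem_image.2 ⟨Sum.inl ⟨2, by omega⟩, mem_univ _, ?_⟩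
      have hs : svals n ⟨2, by omega⟩ = n + 1 := by simp [svals]
      rw [weight_inl_val n hn, hs]
    · refine mem_image.2 ⟨Sum.inl ⟨0, by omega⟩, mem_univ _, ?_⟩
      have hs : svals n ⟨0, by omega⟩ = n := by simp [svals]
      rw [weight_inl_val n hn, hs]
    · exact mem_image.2 ⟨Sum.inr ⟨0, by omega⟩, mem_univ _, weight_inr_val n hn _⟩

lemma colorCount_eq (n : ℕ) (hn : 1 ≤ n) :
    colorCount (JG n) (edgeLab n) = 4 := by
  rw [colorCount, image_weights n hn]
  have d1 : (2*n+2) * (Tn n + (n-1) + 1) ≠ (2*n+2) * (Tn n + (n+1) + 1) :=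
    cyc_ne_cyc n (by omega)
  have d2 : (2*n+2) * (Tn n + (n-1) + 1) ≠ (2*n+2) * (Tn n + n + 1) :=
    cyc_ne_cyc n (by omega)
  have d3 : (2*n+2) * (Tn n + (n+1) + 1) ≠ (2*n+2) * (Tn n + n + 1) :=
    cyc_ne_cyc n (by omega)
  have d4 := cyc_ne_null n (n-1)
  have d5 := cyc_ne_null n (n+1)
  have d6 := cyc_ne_null n n
  rw [Finset.card_insert_of_notMem (by simp [d1, d2, d4]),
    Finset.card_insert_of_notMem (by simp [d3, d5]),
    Finset.card_insert_of_notMem (by simp [d6]),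
    Finset.card_singleton]
lemma bipL_eq (n : ℕ) (i : Fin (2*n+1)) (j : Fin (2*n)) :
    bipL n i j = (2*n+1) * (aZ n i + ((j.val+1 : ℕ) : ZMod (2*n+1))).val
      + (aZ n i + ((j.val+1 : ℕ) : ZMod (2*n+1)) + ((j.val+1 : ℕ) : ZMod (2*n+1))).val + 1 := rfl

lemma decode_eq {m x y x' y' : ℕ} (hm : 0 < m) (hy : y < m) (hy' : y' < m)
    (h : m*x + y = m*x' + y') : x = x' ∧ y = y' := by
  have h1 : (m*x+y) / m = x := by rw [Nat.mul_add_div hm, Nat.div_eq_of_lt hy, add_zero]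
  have h2 : (m*x'+y') / m = x' := by rw [Nat.mul_add_div hm, Nat.div_eq_of_lt hy', add_zero]
  have h3 : (m*x+y) % m = y := by rw [Nat.mul_add_mod, Nat.mod_eq_of_lt hy]
  have h4 : (m*x'+y') % m = y' := by rw [Nat.mul_add_mod, Nat.mod_eq_of_lt hy']
  constructor
  · rw [← h1, ← h2, h]
  · rw [← h3, ← h4, h]

lemma cj_ne_zero (n : ℕ) (j : Fin (2*n)) : ((j.val+1 : ℕ) : ZMod (2*n+1)) ≠ 0 := by
  intro h
  have h2 := congrArg ZMod.val h
  rw [ZMod.val_cast_of_lt (by have := j.isLt; omega), ZMod.val_zero] at h2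
  omega

lemma edge_cases (n : ℕ) (hn : 1 ≤ n) (e : Sym2 (Fin (2*n+1) ⊕ Fin (2*n)))
    (he : e ∈ (JG n).edgeSet) :
    (∃ i : Fin (2*n+1), e = s(Sum.inl i, Sum.inl (i+1))) ∨
    (∃ i j, e = s(Sum.inl i, Sum.inr j)) := by
  have he2 : e ∈ (JG n).edgeFinset := mem_edgeFinset.2 he
  rw [edgeFinset_JG n hn] at he2
  rcases mem_union.1 he2 with h | h
  · obtain ⟨i, -, hi⟩ := mem_image.1 h; exact Or.inl ⟨i, hi.symm⟩
  · obtain ⟨p, -, hp⟩ := mem_image.1 h; exact Or.inr ⟨p.1, p.2, hp.symm⟩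

lemma cyc_ne_bip (n : ℕ) (hn : 1 ≤ n) (i i' : Fin (2*n+1)) (j' : Fin (2*n))
    (h : cycL n i = bipL n i' j') : False := by
  set c : ZMod (2*n+1) := ((j'.val+1 : ℕ) : ZMod (2*n+1)) with hc
  set u : ZMod (2*n+1) := aZ n i' + c with hu
  set b : ℕ := bfun n i.val with hb
  have hblt : b < 2*n+1 := bfun_lt i.isLt
  have h1 : (2*n+1)*b + b + 1 = (2*n+1)*(u.val) + (u + c).val + 1 := by
    rw [show (2*n+1)*b + b + 1 = (2*n+2)*b + 1 by ring]
    exact h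
  have h2 : (2*n+1)*b + b = (2*n+1)*(u.val) + (u + c).val := Nat.add_right_cancel h1
  obtain ⟨hX, hY⟩ := decode_eq (by omega) hblt (ZMod.val_lt _) h2
  have h3 : u = u + c := ZMod.val_injective _ (by rw [← hX, ← hY])
  exact cj_ne_zero n j' (add_eq_left.1 h3.symm)

lemma injOn_lab (n : ℕ) (hn : 1 ≤ n) : Set.InjOn (edgeLab n) (JG n).edgeSet := by
  intro e1 he1 e2 he2 h
  rcases edge_cases n hn e1 he1 with ⟨i, rfl⟩ | ⟨i, j, rfl⟩ <;>
    rcases edge_cases n hn e2 he2 with ⟨i', rfl⟩ | ⟨i', j', rfl⟩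
  · rw [edgeLab_cyc n hn, edgeLab_cyc n hn] at h
    rw [cycL, cycL] at h
    have h2 : bfun n i.val = bfun n i'.val :=
      Nat.eq_of_mul_eq_mul_left (show 0 < 2*n+2 by omega) (by omega)
    rw [Fin.ext (bfun_inj i.isLt i'.isLt h2)]
  · rw [edgeLab_cyc n hn, edgeLab_bip] at h
    exact absurd h (fun h' => cyc_ne_bip n hn i i' j' h')
  · rw [edgeLab_cyc n hn, edgeLab_bip] at h
    exact absurd h.symm (fun h' => cyc_ne_bip n hn i' i j h')
  · rw [edgeLab_bip, edgeLab_bip] at h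
    rw [bipL_eq, bipL_eq] at h
    set c : ZMod (2*n+1) := ((j.val+1 : ℕ) : ZMod (2*n+1)) with hc
    set c' : ZMod (2*n+1) := ((j'.val+1 : ℕ) : ZMod (2*n+1)) with hc'
    set u : ZMod (2*n+1) := aZ n i + c with hu
    set u' : ZMod (2*n+1) := aZ n i' + c' with hu'
    have h2 : (2*n+1)*(u.val) + (u + c).val = (2*n+1)*(u'.val) + (u' + c').val := by omega
    obtain ⟨hX, hY⟩ := decode_eq (show 0 < 2*n+1 by omega) (ZMod.val_lt _) (ZMod.val_lt _) h2
    have hu1 : u = u' := ZMod.val_injective _ hX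
    have hu2 : u + c = u' + c' := ZMod.val_injective _ hY
    rw [hu1] at hu2
    have hcc : c = c' := add_left_cancel hu2
    have hjj : j = j' := by
      have h3 := congrArg ZMod.val hcc
      rw [hc, hc', ZMod.val_cast_of_lt (by have := j.isLt; omega),
        ZMod.val_cast_of_lt (by have := j'.isLt; omega)] at h3
      exact Fin.ext (by omega)
    have hii : i = i' := by
      rw [hu, hu', hcc] at hu1
      have h4 : aZ n i = aZ n i' := add_right_cancel hu1
      have h5 := congrArg ZMod.val h4
      rw [aZ_val n hn, aZ_val n hn] at h5
      exact Fin.ext (afun_inj h5)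
    rw [hjj, hii]

lemma mapsTo_lab (n : ℕ) (hn : 1 ≤ n) :
    Set.MapsTo (edgeLab n) (JG n).edgeSet (Set.Icc 1 ((2*n+1)^2)) := by
  intro e he
  have hsq : (2*n+1)*(2*n) + 2*n + 1 = (2*n+1)^2 := by ring
  rcases edge_cases n hn e he with ⟨i, rfl⟩ | ⟨i, j, rfl⟩
  · rw [edgeLab_cyc n hn, cycL]
    have hb : bfun n i.val ≤ 2*n := by have := bfun_lt i.isLt; omega
    have h2 : (2*n+2) * bfun n i.val ≤ (2*n+2) * (2*n) := Nat.mul_le_mul_left _ hb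
    have h3 : (2*n+2)*(2*n) + 1 = (2*n+1)^2 := by ring
    exact ⟨by omega, by omega⟩
  · rw [edgeLab_bip, bipL_eq]
    have hX : (aZ n i + ((j.val+1 : ℕ) : ZMod (2*n+1))).val ≤ 2*n := by
      have := ZMod.val_lt (aZ n i + ((j.val+1 : ℕ) : ZMod (2*n+1))); omega
    have hY : (aZ n i + ((j.val+1 : ℕ) : ZMod (2*n+1)) + ((j.val+1 : ℕ) : ZMod (2*n+1))).val
        ≤ 2*n := by
      have := ZMod.val_lt
        (aZ n i + ((j.val+1 : ℕ) : ZMod (2*n+1)) + ((j.val+1 : ℕ) : ZMod (2*n+1))); omega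
    have h2 : (2*n+1) * (aZ n i + ((j.val+1 : ℕ) : ZMod (2*n+1))).val ≤ (2*n+1) * (2*n) :=
      Nat.mul_le_mul_left _ hX
    exact ⟨by omega, by omega⟩

lemma bijOn_lab (n : ℕ) (hn : 1 ≤ n) :
    Set.BijOn (edgeLab n) (JG n).edgeSet (Set.Icc 1 ((JG n).edgeSet.ncard)) := by
  rw [ncard_edgeSet_JG n hn]
  refine ⟨mapsTo_lab n hn, injOn_lab n hn, ?_⟩
  have himg : edgeLab n '' (JG n).edgeSet = Set.Icc 1 ((2*n+1)^2) := by
    apply Set.eq_of_subset_of_ncard_le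
    · exact Set.mapsTo_iff_image_subset.1 (mapsTo_lab n hn)
    · rw [Set.ncard_image_of_injOn (injOn_lab n hn), ncard_edgeSet_JG n hn,
        ← Finset.coe_Icc, Set.ncard_coe_finset, Nat.card_Icc]
      omega
    · exact Set.finite_Icc _ _
  rw [Set.SurjOn, himg]

lemma isLA (n : ℕ) (hn : 1 ≤ n) : IsLocalAntimagic (JG n) (edgeLab n) :=
  ⟨bijOn_lab n hn, weight_adj_ne n hn⟩
lemma lower_bound (n : ℕ) (hn : 1 ≤ n) (f : Sym2 (Fin (2*n+1) ⊕ Fin (2*n)) → ℕ)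
    (hf : IsLocalAntimagic (JG n) f) : 4 ≤ colorCount (JG n) f := by
  classical
  set w := vertexWeight (JG n) f with hw
  have hadj := hf.2
  have hcyc : ∀ i : Fin (2*n+1), w (Sum.inl (i+1)) ≠ w (Sum.inl i) := by
    intro i h
    exact hadj ((adj_inl_inl i (i+1)).2 ((cyc_adj n hn i (i+1)).2 (Or.inl rfl))) h.symm
  have hnull : ∀ (j : Fin (2*n)) (i : Fin (2*n+1)), w (Sum.inr j) ≠ w (Sum.inl i) := by
    intro j i h
    exact hadj (adj_inl_inr i j) h.symm
  set a := w (Sum.inl 0) with ha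
  set b := w (Sum.inl 1) with hb
  have hab : a ≠ b := by
    have := hcyc 0
    rw [zero_add] at this
    exact fun h => this h.symm
  -- there is a third cycle weight
  have hthird : ∃ i : Fin (2*n+1), w (Sum.inl i) ≠ a ∧ w (Sum.inl i) ≠ b := by
    by_contra hK'
    push_neg at hK'
    have hK : ∀ i : Fin (2*n+1), w (Sum.inl i) = a ∨ w (Sum.inl i) = b := by
      intro i
      by_cases h : w (Sum.inl i) = a
      · exact Or.inl h
      · exact Or.inr (hK' i h)
    have key : ∀ k : ℕ, (hk : k < 2*n+1) →
        w (Sum.inl (⟨k, hk⟩ : Fin (2*n+1))) = if k % 2 = 0 then a else b := by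
      intro k
      induction k with
      | zero =>
          intro hk
          have h0 : (⟨0, hk⟩ : Fin (2*n+1)) = 0 := rfl
          rw [h0, if_pos (show 0 % 2 = 0 by omega)]
      | succ k ih =>
          intro hk
          have hk' : k < 2*n+1 := by omega
          have hstep : (⟨k, hk'⟩ : Fin (2*n+1)) + 1 = ⟨k+1, hk⟩ := by
            apply Fin.ext
            rw [add_one_val, if_neg (show ¬((⟨k, hk'⟩ : Fin (2*n+1)).val = 2*n) from by
              simp only [Fin.val_mk]; omega)]
          have hne := hcyc ⟨k, hk'⟩
          rw [hstep] at hne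
          have h1 := ih hk'
          by_cases hp : k % 2 = 0
          · rw [if_neg (show ¬((k+1) % 2 = 0) by omega)]
            rw [if_pos hp] at h1
            rcases hK ⟨k+1, hk⟩ with h2 | h2
            · exact absurd (h2.trans h1.symm) hne
            · exact h2
          · rw [if_pos (show (k+1) % 2 = 0 by omega)]
            rw [if_neg hp] at h1
            rcases hK ⟨k+1, hk⟩ with h2 | h2
            · exact h2
            · exact absurd (h2.trans h1.symm) hne
    have hlast : w (Sum.inl (⟨2*n, by omega⟩ : Fin (2*n+1))) = a := by
      rw [key (2*n) (by omega), if_pos (show (2*n) % 2 = 0 by omega)]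
    have hadj1 : (JG n).Adj (Sum.inl (⟨2*n, by omega⟩ : Fin (2*n+1))) (Sum.inl 0) := by
      rw [adj_inl_inl, cyc_adj n hn]
      left
      apply Fin.ext
      rw [add_one_val, if_pos rfl, Fin.val_zero]
    exact hadj hadj1 (hlast.trans ha)
  obtain ⟨i2, hc1, hc2⟩ := hthird
  set c := w (Sum.inl i2) with hcdef
  set d := w (Sum.inr (⟨0, by omega⟩ : Fin (2*n))) with hd
  have hda : d ≠ a := hnull _ _
  have hdb : d ≠ b := hnull _ _
  have hdc : d ≠ c := hnull _ _
  have hsub : ({a, b, c, d} : Finset ℕ) ⊆ Finset.univ.image w := by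
    intro x hx
    simp only [Finset.mem_insert, Finset.mem_singleton] at hx
    rcases hx with rfl | rfl | rfl | rfl
    · exact mem_image.2 ⟨Sum.inl 0, mem_univ _, rfl⟩
    · exact mem_image.2 ⟨Sum.inl 1, mem_univ _, rfl⟩
    · exact mem_image.2 ⟨Sum.inl i2, mem_univ _, rfl⟩
    · exact mem_image.2 ⟨Sum.inr ⟨0, by omega⟩, mem_univ _, rfl⟩
  have hcard : ({a, b, c, d} : Finset ℕ).card = 4 := by
    rw [Finset.card_insert_of_notMem (by simp [hab, Ne.symm hc1, Ne.symm hda]),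
      Finset.card_insert_of_notMem (by simp [Ne.symm hc2, Ne.symm hdb]),
      Finset.card_insert_of_notMem (by simp [Ne.symm hdc]),
      Finset.card_singleton]
  calc 4 = ({a, b, c, d} : Finset ℕ).card := hcard.symm
    _ ≤ (Finset.univ.image w).card := Finset.card_le_card hsub
    _ = colorCount (JG n) f := rfl

/-- Theorem: For every integer `n ≥ 1`, `χ_la(C_{2n+1} ∨ O_{2n}) = 4`. -/
theorem chiLA_oddCycle_join_null_even (n : ℕ) (hn : 1 ≤ n) :
    chiLA (joinG (cycleGraph (2 * n + 1)) (⊥ : SimpleGraph (Fin (2 * n)))) = 4 := by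
  have hmem : 4 ∈ {k | ∃ f, IsLocalAntimagic (JG n) f ∧ colorCount (JG n) f = k} :=
    ⟨edgeLab n, isLA n hn, colorCount_eq n hn⟩
  apply le_antisymm
  · exact Nat.sInf_le hmem
  · apply le_csInf ⟨4, hmem⟩
    rintro k ⟨f, hf, rfl⟩
    exact lower_bound n hn f hf
end

section
/- For all integers m ≥ 2 and n ≥ 1, χ_la(K_{2n} ∨ C_{2m−1}) = 2n + 3. -/
open Finset SimpleGraph
open scoped Classical

section adj
variable {α β : Type*} {G : SimpleGraph α} {H : SimpleGraph β}

lemma joinG_adj_ll {a b : α} : (joinG G H).Adj (.inl a) (.inl b) ↔ a ≠ b ∧ G.Adj a b := by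
  simp [joinG, SimpleGraph.fromRel_adj]
  tauto

lemma joinG_adj_lr {a : α} {c : β} : (joinG G H).Adj (.inl a) (.inr c) := by
  simp [joinG, SimpleGraph.fromRel_adj]

lemma joinG_adj_rl {a : α} {c : β} : (joinG G H).Adj (.inr c) (.inl a) :=
  (joinG_adj_lr).symm

lemma joinG_adj_rr {c d : β} : (joinG G H).Adj (.inr c) (.inr d) ↔ c ≠ d ∧ H.Adj c d := by
  simp [joinG, SimpleGraph.fromRel_adj]
  tauto
end adj

-- vertexWeight as sum over neighbors
lemma incident_filter_eq {V : Type*} [Fintype V] (G : SimpleGraph V) (x : V) :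
    G.edgeFinset.filter (fun e => x ∈ e) = (univ.filter (G.Adj x)).image (fun y => s(x,y)) := by
  ext e
  simp only [mem_filter, mem_image, mem_univ, true_and, SimpleGraph.mem_edgeFinset]
  constructor
  · rintro ⟨he, hx⟩
    induction e with
    | _ u v =>
      rcases Sym2.mem_iff.mp hx with rfl | rfl
      · exact ⟨v, he, rfl⟩
      · exact ⟨u, he.symm, Sym2.eq_swap⟩
  · rintro ⟨y, hy, rfl⟩
    exact ⟨hy, Sym2.mem_mk_left x y⟩

lemma vertexWeight_eq_sum_neighbors {V : Type*} [Fintype V] (G : SimpleGraph V)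
    (f : Sym2 V → ℕ) (x : V) :
    vertexWeight G f x = ∑ y ∈ univ.filter (G.Adj x), f s(x,y) := by
  rw [vertexWeight, incident_filter_eq, Finset.sum_image]
  intro y hy z hz h
  exact (Sym2.congr_right).mp h

lemma vertexWeight_eq_sum_ite {V : Type*} [Fintype V] (G : SimpleGraph V)
    (f : Sym2 V → ℕ) (x : V) :
    vertexWeight G f x = ∑ y : V, if G.Adj x y then f s(x,y) else 0 := by
  rw [vertexWeight_eq_sum_neighbors, Finset.sum_filter]
open Finset

/-- label of cycle edge `{j, j+1}` -/
def aL (k j : ℕ) : ℕ := if j % 2 = 0 then j/2 + 1 else k - j/2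

/-- bipartite entry for row r column j (1-based value in [1, (r+1)k] block) -/
def ent (k r j : ℕ) : ℕ := r * k + (if r % 2 = 0 then 1 + j else k - j)

lemma aL_bounds {k j : ℕ} (hko : k % 2 = 1) (hj : j < k) :
    1 ≤ aL k j ∧ aL k j ≤ k := by
  unfold aL; split <;> omega

lemma aL_inj {k : ℕ} (hko : k % 2 = 1) {j1 j2 : ℕ} (h1 : j1 < k) (h2 : j2 < k)
    (h : aL k j1 = aL k j2) : j1 = j2 := by
  unfold aL at h; split at h <;> split at h <;> omega

lemma aL_surj {k v : ℕ} (hko : k % 2 = 1) (h1 : 1 ≤ v) (h2 : v ≤ k) :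
    ∃ j < k, aL k j = v := by
  rcases le_or_gt v ((k+1)/2) with h | h
  · exact ⟨2*(v-1), by omega, by unfold aL; split <;> omega⟩
  · refine ⟨2*(k-v)+1, by omega, ?_⟩
    unfold aL; split <;> omega

lemma ent_bounds {k r j : ℕ} (hj : j < k) :
    r * k + 1 ≤ ent k r j ∧ ent k r j ≤ r * k + k := by
  unfold ent; split <;> omega

lemma ent_inj {k r1 j1 r2 j2 : ℕ} (h1 : j1 < k) (h2 : j2 < k)
    (h : ent k r1 j1 = ent k r2 j2) : r1 = r2 ∧ j1 = j2 := by
  have b1 := ent_bounds (k := k) (r := r1) h1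
  have b2 := ent_bounds (k := k) (r := r2) h2
  have hrr : r1 = r2 := by
    rcases lt_trichotomy r1 r2 with hr | hr | hr
    · have h' : (r1+1)*k ≤ r2*k := Nat.mul_le_mul_right k hr
      have h'' : (r1+1)*k = r1*k+k := by ring
      omega
    · exact hr
    · have h' : (r2+1)*k ≤ r1*k := Nat.mul_le_mul_right k hr
      have h'' : (r2+1)*k = r2*k+k := by ring
      omega
  subst hrr
  refine ⟨rfl, ?_⟩
  unfold ent at h; split at h <;> omega

lemma ent_surj {k N v : ℕ} (hk : 1 ≤ k) (h1 : 1 ≤ v) (h2 : v ≤ N * k) :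
    ∃ r < N, ∃ j < k, ent k r j = v := by
  obtain ⟨r, w, hw, hv, hrN⟩ : ∃ r w, w < k ∧ v = r * k + w + 1 ∧ r < N := by
    have hdm := Nat.div_add_mod (v-1) k
    rw [Nat.mul_comm] at hdm
    have hmod : (v - 1) % k < k := Nat.mod_lt _ (by omega)
    refine ⟨(v-1)/k, (v-1)%k, hmod, by omega, ?_⟩
    by_contra hcon
    have : N * k ≤ (v-1)/k * k := Nat.mul_le_mul_right k (by omega)
    omega
  refine ⟨r, hrN, ?_⟩
  rcases Nat.even_or_odd r with he | ho
  · refine ⟨w, hw, ?_⟩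
    unfold ent
    rw [if_pos (Nat.even_iff.mp he)]
    omega
  · refine ⟨k - 1 - w, by omega, ?_⟩
    unfold ent
    rw [if_neg (by have := Nat.odd_iff.mp ho; omega)]
    omega

lemma sum_ent_row {k m : ℕ} (hk : k = 2*m - 1) (hm : 2 ≤ m) (r : ℕ) :
    ∑ j ∈ range k, ent k r j = r * k * k + k * m := by
  obtain ⟨mm, rfl⟩ : ∃ mm, m = mm + 2 := ⟨m - 2, by omega⟩
  obtain rfl : k = 2*mm + 3 := by omega
  have hgauss : ∑ j ∈ range (2*mm+3), j = (2*mm+3)*(mm+1) := by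
    have h := Finset.sum_range_id_mul_two (2*mm+3)
    have e : (2*mm+3) * (2*mm+3-1) = ((2*mm+3)*(mm+1))*2 := by
      have h2 : 2*mm+3-1 = 2*(mm+1) := by omega
      rw [h2]; ring
    omega
  unfold ent
  rcases Nat.even_or_odd r with he | ho
  · rw [Finset.sum_congr rfl (fun j hj => by rw [if_pos (Nat.even_iff.mp he)])]
    rw [Finset.sum_add_distrib, Finset.sum_add_distrib, Finset.sum_const, Finset.sum_const,
      card_range, hgauss]
    simp only [smul_eq_mul]
    ring
  · rw [Finset.sum_congr rfl (fun j hj => by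
      rw [if_neg (by have := Nat.odd_iff.mp ho; omega)])]
    rw [← Finset.sum_range_reflect]
    have hc : ∀ j ∈ range (2*mm+3), r * (2*mm+3) + ((2*mm+3) - ((2*mm+3) - 1 - j))
        = r * (2*mm+3) + (1 + j) := by
      intro j hj; rw [mem_range] at hj; omega
    rw [Finset.sum_congr rfl hc, Finset.sum_add_distrib, Finset.sum_add_distrib,
      Finset.sum_const, Finset.sum_const, card_range, hgauss]
    simp only [smul_eq_mul]
    ring

lemma sum_ent_col {k : ℕ} (n : ℕ) {j : ℕ} (hj : j < k) :
    ∑ r ∈ range (2*n), ent k r j = 2*n*n*k + n := by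
  induction n with
  | zero => simp
  | succ n ih =>
    have key : ∑ r ∈ range (2*n+2), ent k r j
        = 2*n*n*k + n + (ent k (2*n) j + ent k (2*n+1) j) := by
      rw [show 2*n+2 = (2*n)+1+1 from rfl, Finset.sum_range_succ, Finset.sum_range_succ, ih]
      ring
    have hrange : 2*(n+1) = 2*n+2 := by ring
    rw [hrange, key]
    have e1 : ent k (2*n) j = 2*(n*k) + (1 + j) := by
      unfold ent; rw [if_pos (by omega)]; ring_nf
    have e2 : ent k (2*n+1) j + j = 2*(n*k) + 2*k := by
      unfold ent; rw [if_neg (by omega)]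
      have : (2*n+1)*k = 2*(n*k) + k := by ring
      omega
    have expand : (2*n+2)*(n+1)*k = 2*(n*n*k) + 4*(n*k) + 2*k := by ring
    have c1 : 2*n*n*k = 2*(n*n*k) := by ring
    omega

section construction
variable (K c n : ℕ)
open Fin.CommRing

noncomputable def eqK (n : ℕ) : {p : Sym2 (Fin (2*n)) // ¬ p.IsDiag} ≃ Fin (n*(2*n-1)) := by
  apply Fintype.equivFinOfCardEq
  rw [Sym2.card_subtype_not_diag, Fintype.card_fin, Nat.choose_two_right]
  have h : 2*n*(2*n-1) = 2*(n*(2*n-1)) := by ring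
  omega

noncomputable def labelK (a b : Fin (2*n)) : ℕ :=
  if h : a = b then 0
  else K + 2*n*K + ((eqK n) ⟨s(a,b), fun hd => h (Sym2.mk_isDiag_iff.mp hd)⟩).val + 1

lemma labelK_symm (a b : Fin (2*n)) : labelK K n a b = labelK K n b a := by
  unfold labelK
  rcases eq_or_ne a b with rfl | h
  · rfl
  · rw [dif_neg h, dif_neg h.symm]
    have he : (⟨s(a,b), fun hd => h (Sym2.mk_isDiag_iff.mp hd)⟩ : {p : Sym2 (Fin (2*n)) // ¬ p.IsDiag})
        = ⟨s(b,a), fun hd => h.symm (Sym2.mk_isDiag_iff.mp hd)⟩ := Subtype.ext Sym2.eq_swap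
    rw [he]

noncomputable def Dsum (a : Fin (2*n)) : ℕ := ∑ b ∈ univ.erase a, labelK K n a b

noncomputable def sortP : Equiv.Perm (Fin (2*n)) := Tuple.sort (Dsum K n)

noncomputable def labelB (a : Fin (2*n)) (j : Fin (c+3)) : ℕ :=
  (c+3) + ent (c+3) ((sortP (c+3) n).symm a) j

noncomputable def labelC (i j : Fin (c+3)) : ℕ :=
  if i + 1 = j then aL (c+3) i else if j + 1 = i then aL (c+3) j else 0

lemma two_ne_zero_fin : (2 : Fin (c+3)) ≠ 0 := by
  intro h
  have h2 : ((2 : Fin (c+3)) : ℕ) = 2 := rfl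
  rw [h] at h2
  simp at h2

lemma labelC_symm (i j : Fin (c+3)) : labelC c i j = labelC c j i := by
  unfold labelC
  rcases eq_or_ne (i+1) j with h1 | h1 <;> rcases eq_or_ne (j+1) i with h2 | h2
  · exfalso
    have h3 : i + 1 + 1 = i := by rw [h1, h2]
    rw [add_assoc, one_add_one_eq_two, add_eq_left] at h3
    exact two_ne_zero_fin c h3
  · rw [if_pos h1, if_neg h2, if_pos h1]
  · rw [if_neg h1, if_pos h2, if_pos h2]
  · rw [if_neg h1, if_neg h2, if_neg h2, if_neg h1]

noncomputable def gF : (Fin (2*n) ⊕ Fin (c+3)) → (Fin (2*n) ⊕ Fin (c+3)) → ℕ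
  | .inl a, .inl b => labelK (c+3) n a b
  | .inl a, .inr j => labelB c n a j
  | .inr j, .inl a => labelB c n a j
  | .inr i, .inr j => labelC c i j

lemma gF_symm : ∀ x y, gF c n x y = gF c n y x := by
  rintro (a | i) (b | j)
  · exact labelK_symm (c+3) n a b
  · rfl
  · rfl
  · exact labelC_symm c i j

noncomputable def fF : Sym2 (Fin (2*n) ⊕ Fin (c+3)) → ℕ :=
  Sym2.lift ⟨gF c n, gF_symm c n⟩

lemma fF_mk (x y : Fin (2*n) ⊕ Fin (c+3)) : fF c n s(x,y) = gF c n x y := rfl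

noncomputable def GG : SimpleGraph (Fin (2*n) ⊕ Fin (c+3)) :=
  joinG (⊤ : SimpleGraph (Fin (2*n))) (cycleGraph (c+3))

lemma GG_adj_ll {a b : Fin (2*n)} : (GG c n).Adj (.inl a) (.inl b) ↔ a ≠ b := by
  rw [GG, joinG_adj_ll]
  simp [top_adj]

lemma GG_adj_lr {a : Fin (2*n)} {j : Fin (c+3)} : (GG c n).Adj (.inl a) (.inr j) :=
  joinG_adj_lr

lemma GG_adj_rl {a : Fin (2*n)} {j : Fin (c+3)} : (GG c n).Adj (.inr j) (.inl a) :=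
  joinG_adj_rl

lemma GG_adj_rr {i j : Fin (c+3)} :
    (GG c n).Adj (.inr i) (.inr j) ↔ (cycleGraph (c+3)).Adj i j := by
  rw [GG, joinG_adj_rr]
  exact and_iff_right_of_imp (fun h => h.ne)

lemma sub_ne_add (j : Fin (c+3)) : j - 1 ≠ j + 1 := by
  intro h
  rw [sub_eq_iff_eq_add] at h
  have h' : j = j + 2 := by
    conv_lhs => rw [h]
    ring
  exact two_ne_zero_fin c (left_eq_add.mp h')

lemma cyc_adj_iff {i j : Fin (c+3)} :
    (cycleGraph (c+3)).Adj i j ↔ j = i - 1 ∨ j = i + 1 := by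
  rw [cycleGraph_adj]
  constructor
  · rintro (h | h)
    · left; rw [← h]; ring
    · right; rw [← h]; ring
  · rintro (rfl | rfl)
    · left; ring
    · right; ring

lemma labelC_right (j : Fin (c+3)) : labelC c j (j+1) = aL (c+3) j.val := by
  rw [labelC, if_pos rfl]

lemma labelC_left (j : Fin (c+3)) : labelC c j (j-1) = aL (c+3) ((j-1 : Fin (c+3)) : ℕ) := by
  rw [labelC, if_neg (by have := sub_ne_add c j; tauto), if_pos (by ring)]

lemma cycle_nbr_sum (j : Fin (c+3)) :
    ∑ d : Fin (c+3), (if (cycleGraph (c+3)).Adj j d then labelC c j d else 0)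
      = aL (c+3) ((j - 1 : Fin (c+3)) : ℕ) + aL (c+3) j.val := by
  rw [← Finset.sum_filter]
  have hfil : (univ.filter ((cycleGraph (c+3)).Adj j)) = {j - 1, j + 1} := by
    rw [← neighborFinset_eq_filter, cycleGraph_neighborFinset]
  rw [hfil, Finset.sum_pair (sub_ne_add c j), labelC_left, labelC_right]

lemma weight_inr_s16 (j : Fin (c+3)) :
    vertexWeight (GG c n) (fF c n) (.inr j)
      = 2*n*(c+3) + 2*n*n*(c+3) + n
        + (aL (c+3) ((j-1 : Fin (c+3)) : ℕ) + aL (c+3) (j : ℕ)) := by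
  rw [vertexWeight_eq_sum_ite, Fintype.sum_sum_type]
  have h1 : ∑ a : Fin (2*n), (if (GG c n).Adj (.inr j) (.inl a)
        then fF c n s(Sum.inr j, Sum.inl a) else 0)
      = 2*n*(c+3) + (2*n*n*(c+3) + n) := by
    have e1 : ∀ a : Fin (2*n), (if (GG c n).Adj (.inr j) (.inl a)
        then fF c n s(Sum.inr j, Sum.inl a) else 0)
        = (c+3) + ent (c+3) (((sortP (c+3) n).symm a : Fin (2*n)) : ℕ) (j : ℕ) := by
      intro a
      rw [if_pos (GG_adj_rl c n)]
      rfl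
    rw [Finset.sum_congr rfl (fun a _ => e1 a), Finset.sum_add_distrib, Finset.sum_const,
      Finset.card_univ, Fintype.card_fin, smul_eq_mul]
    congr 1
    rw [Equiv.sum_comp ((sortP (c+3) n).symm) (fun b : Fin (2*n) => ent (c+3) (b : ℕ) (j : ℕ)),
      Fin.sum_univ_eq_sum_range (fun r => ent (c+3) r (j : ℕ)) (2*n),
      sum_ent_col n j.isLt]
  have h2 : ∑ d : Fin (c+3), (if (GG c n).Adj (.inr j) (.inr d)
        then fF c n s(Sum.inr j, Sum.inr d) else 0)
      = aL (c+3) ((j-1 : Fin (c+3)) : ℕ) + aL (c+3) (j : ℕ) := by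
    rw [← cycle_nbr_sum c j]
    apply Finset.sum_congr rfl
    intro d _
    exact if_congr (GG_adj_rr c n) rfl rfl
  rw [h1, h2]
  ring

lemma weight_inl_s16 {m : ℕ} (hc : c+3 = 2*m-1) (hm : 2 ≤ m) (a : Fin (2*n)) :
    vertexWeight (GG c n) (fF c n) (.inl a)
      = Dsum (c+3) n a
        + ((((sortP (c+3) n).symm a : Fin (2*n)) : ℕ) * (c+3) * (c+3)
            + (c+3)*(c+3) + (c+3)*m) := by
  rw [vertexWeight_eq_sum_ite, Fintype.sum_sum_type]
  have h1 : ∑ b : Fin (2*n), (if (GG c n).Adj (.inl a) (.inl b)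
        then fF c n s(Sum.inl a, Sum.inl b) else 0)
      = Dsum (c+3) n a := by
    rw [← Finset.sum_filter]
    rw [Dsum]
    apply Finset.sum_congr
    · ext b
      simp only [Finset.mem_filter, Finset.mem_univ, true_and, Finset.mem_erase, GG_adj_ll,
        and_true]
      exact ne_comm
    · intro b _
      rfl
  have h2 : ∑ d : Fin (c+3), (if (GG c n).Adj (.inl a) (.inr d)
        then fF c n s(Sum.inl a, Sum.inr d) else 0)
      = (((sortP (c+3) n).symm a : Fin (2*n)) : ℕ) * (c+3) * (c+3)
          + (c+3)*(c+3) + (c+3)*m := by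
    have e1 : ∀ d : Fin (c+3), (if (GG c n).Adj (.inl a) (.inr d)
        then fF c n s(Sum.inl a, Sum.inr d) else 0)
        = (c+3) + ent (c+3) (((sortP (c+3) n).symm a : Fin (2*n)) : ℕ) (d : ℕ) := by
      intro d
      rw [if_pos (GG_adj_lr c n)]
      rfl
    rw [Finset.sum_congr rfl (fun d _ => e1 d), Finset.sum_add_distrib, Finset.sum_const,
      Finset.card_univ, Fintype.card_fin, smul_eq_mul,
      Fin.sum_univ_eq_sum_range (fun j => ent (c+3) (((sortP (c+3) n).symm a : Fin (2*n)) : ℕ) j) (c+3),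
      sum_ent_row hc hm]
    ring
  rw [h1, h2]

lemma fin_sub_one_val (j : Fin (c+3)) :
    ((j - 1 : Fin (c+3)) : ℕ) = if (j:ℕ) = 0 then c+2 else (j:ℕ) - 1 := by
  rw [Fin.sub_def]
  simp only [Fin.val_one]
  by_cases h : (j:ℕ) = 0
  · rw [if_pos h, h]
    have h2 : c+3-1+0 = c+2 := by omega
    rw [h2]
    exact Nat.mod_eq_of_lt (by omega)
  · rw [if_neg h]
    have h2 : c+3-1+(j:ℕ) = ((j:ℕ) - 1) + (c+3) := by omega
    rw [h2, Nat.add_mod_right]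
    exact Nat.mod_eq_of_lt (by have := j.isLt; omega)

lemma fin_add_one_val (i : Fin (c+3)) :
    ((i + 1 : Fin (c+3)) : ℕ) = if (i:ℕ) = c+2 then 0 else (i:ℕ) + 1 := by
  rw [Fin.val_add_one]
  by_cases h : i = Fin.last (c+2)
  · rw [if_pos h, if_pos (by rw [h]; rfl)]
  · rw [if_neg h, if_neg (by intro hv; exact h (Fin.ext hv))]

/-- classification of the cycle-part weight sums -/
lemma cw_val {m : ℕ} (hc : c+3 = 2*m-1) (hm : 2 ≤ m) (j : Fin (c+3)) :
    aL (c+3) ((j-1 : Fin (c+3)) : ℕ) + aL (c+3) (j : ℕ)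
      = if (j:ℕ) = 0 then m+1 else (if (j:ℕ) % 2 = 1 then c+4 else c+5) := by
  have hj := j.isLt
  rw [fin_sub_one_val]
  by_cases h : (j:ℕ) = 0
  · rw [if_pos h, if_pos h, h]
    unfold aL
    have hc2 : (c+2) % 2 = 0 := by omega
    rw [if_pos hc2, if_pos (by norm_num)]
    omega
  · rw [if_neg h, if_neg h]
    unfold aL
    by_cases hp : (j:ℕ) % 2 = 1
    · rw [if_pos hp, if_pos (by omega), if_neg (by omega)]
      omega
    · rw [if_neg hp, if_neg (by omega), if_pos (by omega)]
      omega

/-- every cycle edge is `s(x, x+1)` and its label is `aL x` -/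
lemma cycle_edge_normalize {i j : Fin (c+3)} (h : (cycleGraph (c+3)).Adj i j) :
    ∃ x : Fin (c+3), s(i, j) = s(x, x+1) ∧ labelC c i j = aL (c+3) (x : ℕ) := by
  rcases (cyc_adj_iff c).mp h with h1 | h1
  · refine ⟨j, ?_, ?_⟩
    · have : i = j + 1 := by rw [h1]; ring
      rw [this, Sym2.eq_swap]
    · have hi : i = j + 1 := by rw [h1]; ring
      have hne : ¬ (i + 1 = j) := by
        rw [hi]
        intro hcon
        rw [add_assoc, one_add_one_eq_two] at hcon
        exact two_ne_zero_fin c (add_eq_left.mp hcon)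
      rw [labelC, if_neg hne, if_pos hi.symm]
  · refine ⟨i, ?_, ?_⟩
    · rw [h1]
    · rw [h1]
      exact labelC_right c i
lemma fF_ll (a b : Fin (2*n)) : fF c n s(.inl a, .inl b) = labelK (c+3) n a b := rfl
lemma fF_lr (a : Fin (2*n)) (j : Fin (c+3)) : fF c n s(.inl a, .inr j) = labelB c n a j := rfl
lemma fF_rl (a : Fin (2*n)) (j : Fin (c+3)) : fF c n s(.inr j, .inl a) = labelB c n a j := rfl
lemma fF_rr (i j : Fin (c+3)) : fF c n s(.inr i, .inr j) = labelC c i j := rfl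

lemma labelB_bounds (a : Fin (2*n)) (j : Fin (c+3)) :
    (c+3) + 1 ≤ labelB c n a j ∧ labelB c n a j ≤ (c+3) + 2*n*(c+3) := by
  obtain ⟨r, hrlt, hre⟩ : ∃ r, r < 2*n ∧ ((sortP (c+3) n).symm a : ℕ) = r :=
    ⟨_, Fin.isLt _, rfl⟩
  have hb := ent_bounds (k := c+3) (r := r) (j := (j:ℕ)) j.isLt
  have h1 : (r+1)*(c+3) ≤ 2*n*(c+3) := Nat.mul_le_mul_right _ (by omega)
  have h2 : (r+1)*(c+3) = r*(c+3)+(c+3) := by ring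
  unfold labelB
  rw [hre]
  omega

lemma labelK_bounds {a b : Fin (2*n)} (h : a ≠ b) :
    (c+3) + 2*n*(c+3) + 1 ≤ labelK (c+3) n a b
      ∧ labelK (c+3) n a b ≤ (c+3) + 2*n*(c+3) + n*(2*n-1) := by
  rw [labelK, dif_neg h]
  have := Fin.isLt ((eqK n) ⟨s(a,b), fun hd => h (Sym2.mk_isDiag_iff.mp hd)⟩)
  omega

lemma sym2_not_diag {α : Type*} (p : Sym2 α) (h : ¬ p.IsDiag) :
    ∃ a b, a ≠ b ∧ p = s(a,b) := by
  induction p using Sym2.ind with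
  | _ a b => exact ⟨a, b, fun he => h (by rw [he]; exact Sym2.mk_isDiag_iff.mpr rfl), rfl⟩

lemma fF_bijOn (hko : (c+3) % 2 = 1) :
    Set.BijOn (fF c n) (GG c n).edgeSet
      (Set.Icc 1 ((c+3) + 2*n*(c+3) + n*(2*n-1))) := by
  have hko' : (c+3) % 2 = 1 := hko
  refine ⟨?_, ?_, ?_⟩
  · -- MapsTo
    intro e he
    revert he
    induction e using Sym2.ind with | _ x y =>
    intro he
    rw [SimpleGraph.mem_edgeSet] at he
    rw [Set.mem_Icc]
    match x, y with
    | .inl a, .inl b =>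
      rw [GG_adj_ll] at he
      have := labelK_bounds c n he
      rw [fF_ll]
      omega
    | .inl a, .inr j =>
      have := labelB_bounds c n a j
      rw [fF_lr]
      omega
    | .inr j, .inl a =>
      have := labelB_bounds c n a j
      rw [fF_rl]
      omega
    | .inr i, .inr j =>
      rw [GG_adj_rr] at he
      obtain ⟨x, _, hlab⟩ := cycle_edge_normalize c he
      have := aL_bounds hko (Fin.isLt x)
      rw [fF_rr, hlab]
      omega
  · -- InjOn
    intro e1 he1 e2 he2 hfe
    revert he1 he2 hfe
    refine Sym2.inductionOn₂ e1 e2 ?_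
    rintro (a1|i1) (b1|j1) (a2|i2) (b2|j2) he1 he2 hfe <;>
      rw [SimpleGraph.mem_edgeSet] at he1 he2
    -- ll vs *
    · rw [GG_adj_ll] at he1 he2
      rw [fF_ll, fF_ll, labelK, labelK, dif_neg he1, dif_neg he2] at hfe
      have hv : ((eqK n) ⟨s(a1,b1), fun hd => he1 (Sym2.mk_isDiag_iff.mp hd)⟩ : Fin _)
          = (eqK n) ⟨s(a2,b2), fun hd => he2 (Sym2.mk_isDiag_iff.mp hd)⟩ := Fin.ext (by omega)
      have hs : s(a1,b1) = s(a2,b2) := congrArg Subtype.val ((eqK n).injective hv)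
      have := congrArg (Sym2.map (Sum.inl : Fin (2*n) → Fin (2*n) ⊕ Fin (c+3))) hs
      rwa [Sym2.map_pair_eq, Sym2.map_pair_eq] at this
    · rw [GG_adj_ll] at he1
      have h1 := labelK_bounds c n he1
      have h2 := labelB_bounds c n a2 j2
      rw [fF_ll, fF_lr] at hfe
      omega
    · rw [GG_adj_ll] at he1
      have h1 := labelK_bounds c n he1
      have h2 := labelB_bounds c n b2 i2
      rw [fF_ll, fF_rl] at hfe
      omega
    · rw [GG_adj_ll] at he1
      rw [GG_adj_rr] at he2
      obtain ⟨x, _, hlab⟩ := cycle_edge_normalize c he2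
      have h1 := labelK_bounds c n he1
      have h2 := aL_bounds hko (Fin.isLt x)
      rw [fF_ll, fF_rr, hlab] at hfe
      omega
    -- lr vs *
    · rw [GG_adj_ll] at he2
      have h1 := labelB_bounds c n a1 j1
      have h2 := labelK_bounds c n he2
      rw [fF_lr, fF_ll] at hfe
      omega
    · rw [fF_lr, fF_lr, labelB, labelB] at hfe
      have hent : ent (c+3) (((sortP (c+3) n).symm a1 : Fin (2*n)) : ℕ) (j1 : ℕ)
          = ent (c+3) (((sortP (c+3) n).symm a2 : Fin (2*n)) : ℕ) (j2 : ℕ) := by omega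
      obtain ⟨hr, hj⟩ := ent_inj j1.isLt j2.isLt hent
      have ha : a1 = a2 := (sortP (c+3) n).symm.injective (Fin.ext hr)
      rw [ha, Fin.ext hj]
    · rw [fF_lr, fF_rl, labelB, labelB] at hfe
      have hent : ent (c+3) (((sortP (c+3) n).symm a1 : Fin (2*n)) : ℕ) (j1 : ℕ)
          = ent (c+3) (((sortP (c+3) n).symm b2 : Fin (2*n)) : ℕ) (i2 : ℕ) := by omega
      obtain ⟨hr, hj⟩ := ent_inj j1.isLt i2.isLt hent
      have ha : a1 = b2 := (sortP (c+3) n).symm.injective (Fin.ext hr)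
      rw [ha, Fin.ext hj, Sym2.eq_swap]
    · rw [GG_adj_rr] at he2
      obtain ⟨x, _, hlab⟩ := cycle_edge_normalize c he2
      have h1 := labelB_bounds c n a1 j1
      have h2 := aL_bounds hko (Fin.isLt x)
      rw [fF_lr, fF_rr, hlab] at hfe
      omega
    -- rl vs *
    · rw [GG_adj_ll] at he2
      have h1 := labelB_bounds c n b1 i1
      have h2 := labelK_bounds c n he2
      rw [fF_rl, fF_ll] at hfe
      omega
    · rw [fF_rl, fF_lr, labelB, labelB] at hfe
      have hent : ent (c+3) (((sortP (c+3) n).symm b1 : Fin (2*n)) : ℕ) (i1 : ℕ)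
          = ent (c+3) (((sortP (c+3) n).symm a2 : Fin (2*n)) : ℕ) (j2 : ℕ) := by omega
      obtain ⟨hr, hj⟩ := ent_inj i1.isLt j2.isLt hent
      have ha : b1 = a2 := (sortP (c+3) n).symm.injective (Fin.ext hr)
      rw [ha, Fin.ext hj, Sym2.eq_swap]
    · rw [fF_rl, fF_rl, labelB, labelB] at hfe
      have hent : ent (c+3) (((sortP (c+3) n).symm b1 : Fin (2*n)) : ℕ) (i1 : ℕ)
          = ent (c+3) (((sortP (c+3) n).symm b2 : Fin (2*n)) : ℕ) (i2 : ℕ) := by omega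
      obtain ⟨hr, hj⟩ := ent_inj i1.isLt i2.isLt hent
      have ha : b1 = b2 := (sortP (c+3) n).symm.injective (Fin.ext hr)
      rw [ha, Fin.ext hj]
    · rw [GG_adj_rr] at he2
      obtain ⟨x, _, hlab⟩ := cycle_edge_normalize c he2
      have h1 := labelB_bounds c n b1 i1
      have h2 := aL_bounds hko (Fin.isLt x)
      rw [fF_rl, fF_rr, hlab] at hfe
      omega
    -- rr vs *
    · rw [GG_adj_rr] at he1
      rw [GG_adj_ll] at he2
      obtain ⟨x, _, hlab⟩ := cycle_edge_normalize c he1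
      have h1 := aL_bounds hko (Fin.isLt x)
      have h2 := labelK_bounds c n he2
      rw [fF_rr, fF_ll, hlab] at hfe
      omega
    · rw [GG_adj_rr] at he1
      obtain ⟨x, _, hlab⟩ := cycle_edge_normalize c he1
      have h1 := aL_bounds hko (Fin.isLt x)
      have h2 := labelB_bounds c n a2 j2
      rw [fF_rr, fF_lr, hlab] at hfe
      omega
    · rw [GG_adj_rr] at he1
      obtain ⟨x, _, hlab⟩ := cycle_edge_normalize c he1
      have h1 := aL_bounds hko (Fin.isLt x)
      have h2 := labelB_bounds c n b2 i2
      rw [fF_rr, fF_rl, hlab] at hfe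
      omega
    · rw [GG_adj_rr] at he1 he2
      obtain ⟨x1, hx1, hlab1⟩ := cycle_edge_normalize c he1
      obtain ⟨x2, hx2, hlab2⟩ := cycle_edge_normalize c he2
      rw [fF_rr, fF_rr, hlab1, hlab2] at hfe
      have hx : x1 = x2 := Fin.ext (aL_inj hko (Fin.isLt x1) (Fin.isLt x2) hfe)
      have hmap := congrArg (Sym2.map (Sum.inr : Fin (c+3) → Fin (2*n) ⊕ Fin (c+3)))
        (hx1.trans (hx ▸ hx2.symm))
      rwa [Sym2.map_pair_eq, Sym2.map_pair_eq] at hmap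
  · -- SurjOn
    intro v hv
    rw [Set.mem_Icc] at hv
    rcases le_or_gt v (c+3) with hv1 | hv1
    · obtain ⟨j, hj, haj⟩ := aL_surj hko hv.1 hv1
      refine ⟨s(.inr ⟨j, hj⟩, .inr (⟨j, hj⟩ + 1)), ?_, ?_⟩
      · rw [SimpleGraph.mem_edgeSet, GG_adj_rr, cyc_adj_iff]
        right; rfl
      · rw [fF_rr, labelC_right]
        exact haj
    · rcases le_or_gt v ((c+3) + 2*n*(c+3)) with hv2 | hv2
      · obtain ⟨r, hr, j, hj, hent⟩ := ent_surj (k := c+3) (N := 2*n) (v := v - (c+3))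
          (by omega) (by omega) (by omega)
        refine ⟨s(.inl ((sortP (c+3) n) ⟨r, hr⟩), .inr ⟨j, hj⟩), ?_, ?_⟩
        · exact SimpleGraph.mem_edgeSet _ |>.mpr (GG_adj_lr c n)
        · rw [fF_lr, labelB, Equiv.symm_apply_apply]
          simp only [Fin.val_mk]
          omega
      · set idx := v - ((c+3) + 2*n*(c+3)) - 1 with hidx
        have hlt : idx < n*(2*n-1) := by omega
        obtain ⟨a, b, hab, hs⟩ := sym2_not_diag ((eqK n).symm ⟨idx, hlt⟩ : Sym2 (Fin (2*n)))
          ((eqK n).symm ⟨idx, hlt⟩).2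
        refine ⟨s(.inl a, .inl b), ?_, ?_⟩
        · rw [SimpleGraph.mem_edgeSet, GG_adj_ll]
          exact hab
        · rw [fF_ll, labelK, dif_neg hab]
          have hsub : (⟨s(a,b), fun hd => hab (Sym2.mk_isDiag_iff.mp hd)⟩
              : {p : Sym2 (Fin (2*n)) // ¬ p.IsDiag}) = (eqK n).symm ⟨idx, hlt⟩ :=
            Subtype.ext hs.symm
          rw [hsub, Equiv.apply_symm_apply]
          simp only [Fin.val_mk]
          omega

lemma edge_ncard (hko : (c+3) % 2 = 1) :
    (GG c n).edgeSet.ncard = (c+3) + 2*n*(c+3) + n*(2*n-1) := by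
  have h := fF_bijOn c n hko
  rw [← Set.ncard_image_of_injOn h.injOn, h.image_eq, ← Finset.coe_Icc,
    Set.ncard_coe_finset, Nat.card_Icc]
  omega

lemma Dsum_lb (hn : 1 ≤ n) (a : Fin (2*n)) :
    (2*n-1) * ((c+3) + 2*n*(c+3) + 1) ≤ Dsum (c+3) n a := by
  unfold Dsum
  have hcard : (univ.erase a).card = 2*n - 1 := by
    rw [Finset.card_erase_of_mem (mem_univ a), card_univ, Fintype.card_fin]
  calc (2*n-1) * ((c+3) + 2*n*(c+3) + 1)
      = (univ.erase a).card • ((c+3) + 2*n*(c+3) + 1) := by rw [hcard, smul_eq_mul]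
    _ ≤ ∑ b ∈ univ.erase a, labelK (c+3) n a b := by
        apply Finset.card_nsmul_le_sum
        intro b hb
        have hne : a ≠ b := fun h => (Finset.mem_erase.mp hb).1 h.symm
        exact (labelK_bounds c n hne).1

lemma keyineq {K m n : ℕ} (hK : K = 2*m-1) (hm : 2 ≤ m) (hn : 1 ≤ n) :
    2*n*K + 2*n*n*K + n + 2*K < (2*n-1)*(K + 2*n*K + 1) + K*K + K*m := by
  obtain ⟨mm, rfl⟩ : ∃ mm, m = mm + 2 := ⟨m - 2, by omega⟩
  obtain ⟨nn, rfl⟩ : ∃ nn, n = nn + 1 := ⟨n - 1, by omega⟩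
  obtain rfl : K = 2*mm + 3 := by omega
  have h1 : 2*(nn+1) - 1 = 2*nn+1 := by omega
  rw [h1]
  nlinarith [sq_nonneg nn, sq_nonneg mm, Nat.zero_le (nn*mm)]

lemma weight_inr_lt_inl {m : ℕ} (hc : c+3 = 2*m-1) (hm : 2 ≤ m) (hn : 1 ≤ n)
    (j : Fin (c+3)) (a : Fin (2*n)) :
    vertexWeight (GG c n) (fF c n) (.inr j) < vertexWeight (GG c n) (fF c n) (.inl a) := by
  have hko : (c+3) % 2 = 1 := by omega
  rw [weight_inr_s16, weight_inl_s16 c n hc hm]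
  have hD := Dsum_lb c n hn a
  have ha1 := aL_bounds hko (Fin.isLt ((j - 1 : Fin (c+3))))
  have ha2 := aL_bounds hko (Fin.isLt j)
  have hkey := keyineq hc hm hn
  omega

lemma weight_inl_strictmono {m : ℕ} (hc : c+3 = 2*m-1) (hm : 2 ≤ m)
    {i j : Fin (2*n)} (hij : i < j) :
    vertexWeight (GG c n) (fF c n) (.inl ((sortP (c+3) n) i))
      < vertexWeight (GG c n) (fF c n) (.inl ((sortP (c+3) n) j)) := by
  rw [weight_inl_s16 c n hc hm, weight_inl_s16 c n hc hm, Equiv.symm_apply_apply,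
    Equiv.symm_apply_apply]
  have hD : Dsum (c+3) n ((sortP (c+3) n) i) ≤ Dsum (c+3) n ((sortP (c+3) n) j) :=
    Tuple.monotone_sort (Dsum (c+3) n) (le_of_lt hij)
  have hstep : ((i:ℕ)+1) * ((c+3)*(c+3)) ≤ (j:ℕ) * ((c+3)*(c+3)) :=
    Nat.mul_le_mul_right _ (by exact_mod_cast hij)
  have e1 : ((i:ℕ)+1) * ((c+3)*(c+3)) = (i:ℕ)*(c+3)*(c+3) + (c+3)*(c+3) := by ring
  have e2 : (j:ℕ) * ((c+3)*(c+3)) = (j:ℕ)*(c+3)*(c+3) := by ring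
  have hl : 0 < (c+3)*(c+3) := Nat.mul_pos (by omega) (by omega)
  omega

lemma weight_inl_inj {m : ℕ} (hc : c+3 = 2*m-1) (hm : 2 ≤ m) :
    Function.Injective (fun a : Fin (2*n) => vertexWeight (GG c n) (fF c n) (.inl a)) := by
  intro a b hab
  set i := (sortP (c+3) n).symm a with hi
  set j := (sortP (c+3) n).symm b with hj
  have ha : a = (sortP (c+3) n) i := by rw [hi, Equiv.apply_symm_apply]
  have hb : b = (sortP (c+3) n) j := by rw [hj, Equiv.apply_symm_apply]
  rcases lt_trichotomy i j with h | h | h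
  · exfalso
    have hlt := weight_inl_strictmono c n hc hm h
    rw [← ha, ← hb] at hlt
    exact absurd hab hlt.ne
  · rw [ha, hb, h]
  · exfalso
    have hlt := weight_inl_strictmono c n hc hm h
    rw [← ha, ← hb] at hlt
    exact absurd hab hlt.ne'

lemma cw_ne {m : ℕ} (hc : c+3 = 2*m-1) (hm : 2 ≤ m) (i : Fin (c+3)) :
    vertexWeight (GG c n) (fF c n) (.inr i)
      ≠ vertexWeight (GG c n) (fF c n) (.inr (i+1)) := by
  rw [weight_inr_s16 c n i, weight_inr_s16 c n (i+1), cw_val c hc hm i, cw_val c hc hm (i+1)]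
  have hv := fin_add_one_val c i
  have hlt := i.isLt
  by_cases h1 : (i:ℕ) = c+2
  · rw [if_pos h1] at hv
    rw [hv, if_neg (by omega : ¬ (i:ℕ) = 0), if_neg (by omega : ¬ (i:ℕ) % 2 = 1),
      if_pos rfl]
    omega
  · rw [if_neg h1] at hv
    by_cases h2 : (i:ℕ) = 0
    · rw [hv, if_pos h2, if_neg (by omega), if_pos (by omega)]
      omega
    · by_cases hp : (i:ℕ) % 2 = 1
      · rw [hv, if_neg h2, if_pos hp, if_neg (by omega), if_neg (by omega)]
        omega
      · rw [hv, if_neg h2, if_neg hp, if_neg (by omega), if_pos (by omega)]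
        omega

lemma antimagic_prop {m : ℕ} (hc : c+3 = 2*m-1) (hm : 2 ≤ m) (hn : 1 ≤ n) :
    ∀ ⦃x y : Fin (2*n) ⊕ Fin (c+3)⦄, (GG c n).Adj x y →
      vertexWeight (GG c n) (fF c n) x ≠ vertexWeight (GG c n) (fF c n) y := by
  rintro (a|i) (b|j) hadj
  · rw [GG_adj_ll] at hadj
    intro h
    exact hadj (weight_inl_inj c n hc hm h)
  · exact (weight_inr_lt_inl c n hc hm hn j a).ne'
  · exact (weight_inr_lt_inl c n hc hm hn i b).ne
  · rw [GG_adj_rr] at hadj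
    rcases (cyc_adj_iff c).mp hadj with h | h
    · have hi : i = j + 1 := by rw [h]; ring
      rw [hi]
      exact (cw_ne c n hc hm j).symm
    · rw [h]
      exact cw_ne c n hc hm i

lemma image_sum_split {A B : Type*} [Fintype A] [Fintype B] (W : A ⊕ B → ℕ) :
    (univ.image W) = (univ.image (fun a => W (.inl a))) ∪ (univ.image (fun b => W (.inr b))) := by
  ext v
  simp only [mem_image, mem_union, mem_univ, true_and, Sum.exists]

lemma colorCount_fF {m : ℕ} (hc : c+3 = 2*m-1) (hm : 2 ≤ m) (hn : 1 ≤ n) :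
    colorCount (GG c n) (fF c n) = 2*n + 3 := by
  rw [colorCount, image_sum_split]
  have hcardL : (univ.image (fun a : Fin (2*n) =>
      vertexWeight (GG c n) (fF c n) (.inl a))).card = 2*n := by
    rw [Finset.card_image_of_injective _ (weight_inl_inj c n hc hm), card_univ,
      Fintype.card_fin]
  have hR : (univ.image (fun j : Fin (c+3) => vertexWeight (GG c n) (fF c n) (.inr j)))
      = {2*n*(c+3) + 2*n*n*(c+3) + n + (m+1),
         2*n*(c+3) + 2*n*n*(c+3) + n + (c+4),
         2*n*(c+3) + 2*n*n*(c+3) + n + (c+5)} := by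
    ext v
    simp only [mem_image, mem_univ, true_and, mem_insert, mem_singleton]
    constructor
    · rintro ⟨j, rfl⟩
      rw [weight_inr_s16, cw_val c hc hm]
      split
      · left; ring
      · split
        · right; left; ring
        · right; right; ring
    · have h0 : ((0 : Fin (c+3)) : ℕ) = 0 := rfl
      have h1 : ((1 : Fin (c+3)) : ℕ) = 1 := rfl
      have h2 : ((2 : Fin (c+3)) : ℕ) = 2 := rfl
      rintro (rfl | rfl | rfl)
      · exact ⟨0, by rw [weight_inr_s16, cw_val c hc hm, h0, if_pos rfl]⟩
      · exact ⟨1, by rw [weight_inr_s16, cw_val c hc hm, h1,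
          if_neg (by omega), if_pos (by omega)]⟩
      · exact ⟨2, by rw [weight_inr_s16, cw_val c hc hm, h2,
          if_neg (by omega), if_neg (by omega)]⟩
  have hcardR : (univ.image (fun j : Fin (c+3) =>
      vertexWeight (GG c n) (fF c n) (.inr j))).card = 3 := by
    rw [hR]
    rw [Finset.card_insert_of_notMem (by simp only [mem_insert, mem_singleton]; omega),
      Finset.card_insert_of_notMem (by simp only [mem_singleton]; omega),
      Finset.card_singleton]
  have hdisj : Disjoint
      (univ.image (fun a : Fin (2*n) => vertexWeight (GG c n) (fF c n) (.inl a)))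
      (univ.image (fun j : Fin (c+3) => vertexWeight (GG c n) (fF c n) (.inr j))) := by
    rw [Finset.disjoint_left]
    rintro v hv1 hv2
    obtain ⟨a, _, rfl⟩ := Finset.mem_image.mp hv1
    obtain ⟨j, _, hj⟩ := Finset.mem_image.mp hv2
    exact absurd hj (weight_inr_lt_inl c n hc hm hn j a).ne
  rw [Finset.card_union_of_disjoint hdisj, hcardL, hcardR]

lemma isLocalAntimagic_fF {m : ℕ} (hc : c+3 = 2*m-1) (hm : 2 ≤ m) (hn : 1 ≤ n) :
    IsLocalAntimagic (GG c n) (fF c n) := by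
  have hko : (c+3) % 2 = 1 := by omega
  constructor
  · rw [edge_ncard c n hko]
    exact fF_bijOn c n hko
  · exact antimagic_prop c n hc hm hn

set_option maxHeartbeats 2000000 in
lemma colorCount_lb (hce : c % 2 = 0) (hn : 1 ≤ n)
    (f : Sym2 (Fin (2*n) ⊕ Fin (c+3)) → ℕ) (hf : IsLocalAntimagic (GG c n) f) :
    2*n + 3 ≤ colorCount (GG c n) f := by
  have hWinj : Function.Injective
      (fun a : Fin (2*n) => vertexWeight (GG c n) f (.inl a)) := by
    intro a b h
    by_contra hne
    exact hf.2 ((GG_adj_ll c n).mpr hne) h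
  have hadj : ∀ j : Fin (c+3),
      vertexWeight (GG c n) f (.inr j) ≠ vertexWeight (GG c n) f (.inr (j+1)) := by
    intro j
    exact hf.2 ((GG_adj_rr c n).mpr ((cyc_adj_iff c).mpr (Or.inr rfl)))
  have hcardR : 3 ≤ (univ.image
      (fun j : Fin (c+3) => vertexWeight (GG c n) f (.inr j))).card := by
    by_contra hcon
    push_neg at hcon
    have h01 : vertexWeight (GG c n) f (.inr 0) ≠ vertexWeight (GG c n) f (.inr 1) := by
      have := hadj 0
      rwa [zero_add] at this
    have hpair : ({vertexWeight (GG c n) f (.inr 0), vertexWeight (GG c n) f (.inr 1)}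
        : Finset ℕ) ⊆ univ.image (fun j : Fin (c+3) => vertexWeight (GG c n) f (.inr j)) := by
      intro v hv
      rcases Finset.mem_insert.mp hv with rfl | hv
      · exact Finset.mem_image.mpr ⟨0, mem_univ _, rfl⟩
      · rw [Finset.mem_singleton] at hv
        subst hv
        exact Finset.mem_image.mpr ⟨1, mem_univ _, rfl⟩
    have hcard2 : ({vertexWeight (GG c n) f (.inr 0), vertexWeight (GG c n) f (.inr 1)}
        : Finset ℕ).card = 2 := Finset.card_pair h01
    have heq : univ.image (fun j : Fin (c+3) => vertexWeight (GG c n) f (.inr j))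
        = {vertexWeight (GG c n) f (.inr 0), vertexWeight (GG c n) f (.inr 1)} :=
      (Finset.eq_of_subset_of_card_le hpair (by rw [hcard2]; omega)).symm
    have hmem : ∀ j : Fin (c+3),
        vertexWeight (GG c n) f (.inr j) = vertexWeight (GG c n) f (.inr 0)
        ∨ vertexWeight (GG c n) f (.inr j) = vertexWeight (GG c n) f (.inr 1) := by
      intro j
      have hj : vertexWeight (GG c n) f (.inr j) ∈ univ.image
          (fun j : Fin (c+3) => vertexWeight (GG c n) f (.inr j)) :=
        Finset.mem_image.mpr ⟨j, mem_univ _, rfl⟩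
      rw [heq] at hj
      simpa using hj
    have key : ∀ i, ∀ h : i < c+3, vertexWeight (GG c n) f (.inr ⟨i, h⟩)
        = (if i % 2 = 0 then vertexWeight (GG c n) f (.inr 0)
            else vertexWeight (GG c n) f (.inr 1)) := by
      intro i
      induction i with
      | zero =>
        intro h
        rw [if_pos rfl, show (⟨0, h⟩ : Fin (c+3)) = 0 from Fin.ext rfl]
      | succ i ih =>
        intro h
        have hih := ih (by omega)
        have hstep : (⟨i, by omega⟩ : Fin (c+3)) + 1 = ⟨i+1, h⟩ := by
          apply Fin.ext
          rw [fin_add_one_val]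
          simp only [Fin.val_mk]
          rw [if_neg (by omega)]
        have hcong := congrArg (fun z => vertexWeight (GG c n) f (.inr z)) hstep
        have hne : vertexWeight (GG c n) f (.inr ⟨i, by omega⟩)
            ≠ vertexWeight (GG c n) f (.inr ⟨i+1, h⟩) :=
          fun heq => hadj ⟨i, by omega⟩ (heq.trans hcong.symm)
        by_cases hpar : i % 2 = 0
        · rw [if_pos hpar] at hih
          rw [if_neg (by omega)]
          rcases hmem ⟨i+1, h⟩ with h0 | h1
          · exact absurd (hih.trans h0.symm) hne
          · exact h1
        · rw [if_neg hpar] at hih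
          rw [if_pos (by omega)]
          rcases hmem ⟨i+1, h⟩ with h0 | h1
          · exact h0
          · exact absurd (hih.trans h1.symm) hne
    have hlast : vertexWeight (GG c n) f (.inr ⟨c+2, by omega⟩)
        = vertexWeight (GG c n) f (.inr 0) := by
      have := key (c+2) (by omega)
      rwa [if_pos (by omega)] at this
    have hwrap : (⟨c+2, by omega⟩ : Fin (c+3)) + 1 = 0 := by
      apply Fin.ext
      rw [fin_add_one_val]
      simp
    have hcong2 := congrArg (fun z => vertexWeight (GG c n) f (.inr z)) hwrap
    exact hadj ⟨c+2, by omega⟩ (hlast.trans hcong2.symm)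
  have hcardL : (univ.image
      (fun a : Fin (2*n) => vertexWeight (GG c n) f (.inl a))).card = 2*n := by
    rw [Finset.card_image_of_injective _ hWinj, card_univ, Fintype.card_fin]
  have hdisj : Disjoint
      (univ.image (fun a : Fin (2*n) => vertexWeight (GG c n) f (.inl a)))
      (univ.image (fun j : Fin (c+3) => vertexWeight (GG c n) f (.inr j))) := by
    rw [Finset.disjoint_left]
    rintro v hv1 hv2
    obtain ⟨a, _, rfl⟩ := Finset.mem_image.mp hv1
    obtain ⟨j, _, hj⟩ := Finset.mem_image.mp hv2
    exact hf.2 (GG_adj_lr c n) hj.symm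
  rw [colorCount, image_sum_split]
  rw [Finset.card_union_of_disjoint hdisj, hcardL]
  omega

end construction


/-- Theorem: For all integers `m ≥ 2` and `n ≥ 1`, `χ_la(K_{2n} ∨ C_{2m−1}) = 2n + 3`. -/
theorem chiLA_completeEven_join_oddCycle (m n : ℕ) (hm : 2 ≤ m) (hn : 1 ≤ n) :
    chiLA (joinG (⊤ : SimpleGraph (Fin (2 * n))) (cycleGraph (2 * m - 1))) = 2 * n + 3 := by
  obtain ⟨c, hc⟩ : ∃ c, 2*m-1 = c+3 := ⟨2*m-4, by omega⟩
  rw [hc]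
  have hc' : c + 3 = 2*m-1 := hc.symm
  have hce : c % 2 = 0 := by omega
  have hmem : 2*n+3 ∈ {N | ∃ f, IsLocalAntimagic (GG c n) f ∧ colorCount (GG c n) f = N} :=
    ⟨fF c n, isLocalAntimagic_fF c n hc' hm hn, colorCount_fF c n hc' hm hn⟩
  show chiLA (GG c n) = 2*n+3
  rw [chiLA]
  apply le_antisymm
  · exact Nat.sInf_le hmem
  · apply le_csInf ⟨_, hmem⟩
    rintro N ⟨f, hf, rfl⟩
    exact colorCount_lb c n hce hn f hf
end
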